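/- arXiv:2604.21299 — 6 statements merged into one kernel-verified Lean document; each statement's English description precedes it below -/
import Mathlib

section
/- For every real number M > 0 there exist a time T* = T*(M) > 0 and a continuously differentiable function x : [0, T*) → (0, ∞) such that: (i) x(0) = M; (ii) x'(t) ≤ x(t) + x(t)² · exp(∫₀ᵗ x(s) ds) for all t ∈ [0, T*); (iii) limsup_{t → T*⁻} x(t) = ∞; and (iv) there exists a sequence t_n → T*⁻ with x(t_n) = M/(n+1) for every n ∈ ℕ. -/
open Set Filter MeasureTheory Real Topology

set_option maxHeartbeats 2000000

namespace Osc

noncomputable def del (M : ℝ) : ℝ := 1500 * (1/M + 1/Real.sqrt M + 1)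
noncomputable def ph (M t : ℝ) : ℝ := (t / (del M - t))^2
noncomputable def am (M t : ℝ) : ℝ := 2*t*(del M)/(del M - t)^3
noncomputable def sol (M t : ℝ) : ℝ :=
  am M t * (1 - Real.sin (ph M t)) + (M/(del M)) * (del M - t)
noncomputable def sol' (M t : ℝ) : ℝ :=
  (2*(del M)/(del M - t)^3 + 6*t*(del M)/(del M - t)^4) * (1 - Real.sin (ph M t))
    - (am M t)^2 * Real.cos (ph M t) - M/(del M)
noncomputable def U (M t : ℝ) : ℝ :=
  ph M t + Real.cos (ph M t) - 1 + (M/(del M)) * ((del M)^2 - (del M - t)^2)/2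
noncomputable def tau (M φ : ℝ) : ℝ := del M * Real.sqrt φ / (1 + Real.sqrt φ)

variable {M : ℝ}

lemma del_ge (hM : 0 < M) : 1500 ≤ del M := by
  have h1 : 0 < 1/M := by positivity
  have h2 : (0:ℝ) ≤ 1/Real.sqrt M := by positivity
  unfold del; nlinarith

lemma del_pos (hM : 0 < M) : 0 < del M := by
  have h1 : 0 < 1/M := by positivity
  have h2 : (0:ℝ) ≤ 1/Real.sqrt M := by positivity
  unfold del; nlinarith

lemma del_big (hM : 0 < M) : 1500 ≤ M * del M := by
  have h2 : (0:ℝ) ≤ M/Real.sqrt M := by positivity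
  have hs : Real.sqrt M ^ 2 = M := Real.sq_sqrt hM.le
  have : M * del M = 1500 * (1 + M/Real.sqrt M + M) := by
    unfold del; field_simp
  nlinarith

lemma del_sqrt (hM : 0 < M) : 2 ≤ Real.sqrt M * del M := by
  have h0 : 0 < Real.sqrt M := Real.sqrt_pos.mpr hM
  have h1 : Real.sqrt M * (1500 * (1/Real.sqrt M)) = 1500 := by field_simp
  have h2 : (0:ℝ) ≤ Real.sqrt M * (1500 * (1/M)) := by positivity
  have h3 : (0:ℝ) ≤ Real.sqrt M * 1500 := by positivity
  unfold del; nlinarith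


lemma hasDerivAt_ph {t : ℝ} (ht : t < del M) : HasDerivAt (ph M) (am M t) t := by
  have hs : del M - t ≠ 0 := by intro h; linarith [h]
  have hq : HasDerivAt (fun r => r / (del M - r))
      ((1 * (del M - t) - t * (0 - 1)) / (del M - t)^2) t :=
    (hasDerivAt_id t).div ((hasDerivAt_const t (del M)).sub (hasDerivAt_id t)) hs
  have h2 : HasDerivAt (ph M)
      ((2:ℕ) * (t / (del M - t))^(2-1) * ((1 * (del M - t) - t * (0 - 1)) / (del M - t)^2)) t :=
    hq.pow 2
  convert h2 using 1
  unfold am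
  have h : (1 * (del M - t) - t * (0 - 1)) = del M := by ring
  rw [h]; push_cast; rw [pow_one]
  field_simp
  try ring
  try simp

lemma hasDerivAt_am {t : ℝ} (ht : t < del M) :
    HasDerivAt (am M) (2*(del M)/(del M - t)^3 + 6*t*(del M)/(del M - t)^4) t := by
  have hs : del M - t ≠ 0 := by intro h; linarith [h]
  have hs3 : (del M - t)^3 ≠ 0 := pow_ne_zero _ hs
  have hd : HasDerivAt (fun r => (del M - r)^3)
      ((3:ℕ) * (del M - t)^(3-1) * (0 - 1)) t :=
    (((hasDerivAt_const t (del M)).sub (hasDerivAt_id t)).pow 3)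
  have hn : HasDerivAt (fun r => 2*r*(del M)) (2 * del M) t := by
    simpa using ((hasDerivAt_id t).const_mul 2).mul_const (del M)
  have h2 := hn.div hd hs3
  refine h2.congr_deriv ?_
  field_simp; ring

lemma hasDerivAt_sol {t : ℝ} (ht : t < del M) : HasDerivAt (sol M) (sol' M t) t := by
  have hsin : HasDerivAt (fun r => Real.sin (ph M r)) (Real.cos (ph M t) * am M t) t :=
    (Real.hasDerivAt_sin (ph M t)).comp t (hasDerivAt_ph ht)
  have h1 : HasDerivAt (fun r => 1 - Real.sin (ph M r)) (0 - Real.cos (ph M t) * am M t) t :=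
    (hasDerivAt_const t 1).sub hsin
  have h2 := (hasDerivAt_am (M := M) ht).mul h1
  have h3 : HasDerivAt (fun r => (M/(del M)) * (del M - r)) ((M/(del M)) * (0-1)) t :=
    ((hasDerivAt_const t (del M)).sub (hasDerivAt_id t)).const_mul _
  have h4 := h2.add h3
  refine h4.congr_deriv ?_
  unfold sol' am; ring

lemma hasDerivAt_U {t : ℝ} (ht : t < del M) : HasDerivAt (U M) (sol M t) t := by
  have hcos : HasDerivAt (fun r => Real.cos (ph M r)) (-Real.sin (ph M t) * am M t) t :=
    (Real.hasDerivAt_cos (ph M t)).comp t (hasDerivAt_ph ht)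
  have h3 : HasDerivAt (fun r => (M/(del M)) * ((del M)^2 - (del M - r)^2)/2)
      ((M/(del M)) * (0 - ((2:ℕ) * (del M - t)^(2-1) * (0-1)))/2) t := by
    exact ((((hasDerivAt_const t ((del M)^2)).sub
      (((hasDerivAt_const t (del M)).sub (hasDerivAt_id t)).pow 2)).const_mul _).div_const 2)
  have h4 := (((hasDerivAt_ph (M := M) ht).add hcos).sub (hasDerivAt_const t 1)).add h3
  refine h4.congr_deriv ?_
  unfold sol; ring


lemma exp_two_le : Real.exp 2 ≤ 8 := by
  have h := Real.exp_one_lt_d9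
  have h2 : Real.exp 2 = Real.exp 1 * Real.exp 1 := by rw [← Real.exp_add]; norm_num
  nlinarith [Real.exp_pos 1]

lemma exp_four_le : Real.exp 4 ≤ 55 := by
  have h := Real.exp_one_lt_d9
  have h0 := Real.exp_pos 1
  have h2 : Real.exp 4 = (Real.exp 1)^4 := by
    rw [← Real.exp_nat_mul]; norm_num
  have h3 : Real.exp 1 * Real.exp 1 < 2.7182818286 * 2.7182818286 :=
    mul_self_lt_mul_self h0.le h
  nlinarith [sq_nonneg (Real.exp 1), pow_pos h0 2]

lemma expPoly {y E : ℝ} (hy1 : 1 ≤ y) (hE : Real.exp (y-2) ≤ E) :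
    y^6 ≤ 40095*E^2 ∧ y ≤ 32*E := by
  have he0 : (0:ℝ) < Real.exp (y-2) := Real.exp_pos _
  have hE0 : (0:ℝ) < E := lt_of_lt_of_le he0 hE
  constructor
  · have h1 : Real.exp (y/3)^6 = Real.exp (2*y) := by
      rw [← Real.exp_nat_mul]; congr 1; push_cast; ring
    have h2 : (1 + y/3)^6 ≤ Real.exp (2*y) := by
      rw [← h1]
      refine pow_le_pow_left₀ (by linarith) ?_ 6
      have := Real.add_one_le_exp (y/3); linarith
    have h3 : Real.exp (2*y) = Real.exp (y-2)^2 * Real.exp 4 := by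
      rw [← Real.exp_nat_mul, ← Real.exp_add]; congr 1; push_cast; ring
    have h4 : Real.exp (y-2)^2 ≤ E^2 := by nlinarith
    have h5 : (y/3)^6 ≤ (1 + y/3)^6 :=
      pow_le_pow_left₀ (by linarith) (by linarith) 6
    have h6 : (y/3)^6 = y^6/729 := by ring
    have h7 : Real.exp (2*y) ≤ E^2 * 55 := by
      rw [h3]; nlinarith [exp_four_le, Real.exp_pos 4, sq_nonneg (Real.exp (y-2))]
    nlinarith
  · have h1 : Real.exp (y/2)^2 = Real.exp y := by
      rw [← Real.exp_nat_mul]; congr 1; push_cast; ring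
    have h2 : (1 + y/2)^2 ≤ Real.exp y := by
      rw [← h1]
      refine pow_le_pow_left₀ (by linarith) ?_ 2
      have := Real.add_one_le_exp (y/2); linarith
    have h3 : Real.exp y = Real.exp (y-2) * Real.exp 2 := by
      rw [← Real.exp_add]; congr 1; ring
    have h4 : Real.exp y ≤ E * 8 := by
      rw [h3]; nlinarith [exp_two_le, Real.exp_pos 2]
    nlinarith

/-- The core algebraic inequality. -/
lemma core (δ s t ε θ A P Q E : ℝ)
    (hδ1 : 1 ≤ δ) (hbig : 1500 ≤ ε*δ^2)
    (hspos : 0 < s) (hsle : s ≤ δ) (hts : t = δ - s) (ht0 : 0 ≤ t)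
    (hεpos : 0 < ε)
    (hθ : θ = t^2/s^2)
    (hA : A = 2*t*δ/s^3)
    (hP0 : 0 ≤ P) (hP2 : P ≤ 2) (hQ2 : Q^2 ≤ 2*P)
    (hE1 : 1 ≤ E) (hEθ : Real.exp (θ - 2) ≤ E) :
    (2*δ/s^3 + 6*t*δ/s^4)*P + A^2*Q - ε ≤ (A*P + ε*s) + (A*P + ε*s)^2 * E := by
  have hδ0 : 0 < δ := by linarith
  have hE0 : 0 < E := by linarith
  have hA0 : 0 ≤ A := by rw [hA]; positivity
  have hAs3 : A * s^3 = 2*t*δ := by rw [hA]; field_simp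
  have hAle : A * s^3 ≤ 2*δ^2 := by nlinarith
  -- Condition A : 3 ≤ E * ε * s^2
  have condA : 3 ≤ E * ε * s^2 := by
    rcases le_or_gt s (δ/2) with h | h
    · set y : ℝ := δ^2/(4*s^2) with hy
      have hy1 : 1 ≤ y := by
        rw [hy, le_div_iff₀ (by positivity)]; nlinarith
      have h2t : δ ≤ 2*t := by rw [hts]; linarith
      have hδ4t : δ^2 ≤ 4*t^2 := by nlinarith
      have hyθ : y ≤ θ := by
        rw [hy, hθ, div_le_div_iff₀ (by positivity) (by positivity)]
        nlinarith [mul_le_mul_of_nonneg_right hδ4t (sq_nonneg s)]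
      have hEy : Real.exp (y-2) ≤ E :=
        le_trans (Real.exp_le_exp.mpr (by linarith)) hEθ
      have h32 : y ≤ 32*E := (expPoly hy1 hEy).2
      have hys : y * s^2 = δ^2/4 := by rw [hy]; field_simp
      nlinarith [mul_le_mul_of_nonneg_right h32 (le_of_lt (mul_pos hεpos (pow_pos hspos 2)))]
    · have h1 : (δ/2)^2 ≤ s^2 := pow_le_pow_left₀ (by positivity) h.le 2
      have h2 : ε*(δ/2)^2 ≤ ε*s^2 := mul_le_mul_of_nonneg_left h1 hεpos.le
      have h3 : ε*(δ/2)^2 = ε*δ^2/4 := by ring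
      have h4 : ε*s^2 ≤ E*ε*s^2 := by nlinarith [mul_pos hεpos (pow_pos hspos 2)]
      linarith
  -- Condition B : 8*δ ≤ E * ε^2 * s^5
  have condB : 8*δ ≤ E * ε^2 * s^5 := by
    rcases le_or_gt s (δ/2) with h | h
    · set y : ℝ := δ^2/(4*s^2) with hy
      have hy1 : 1 ≤ y := by
        rw [hy, le_div_iff₀ (by positivity)]; nlinarith
      have h2t : δ ≤ 2*t := by rw [hts]; linarith
      have hδ4t : δ^2 ≤ 4*t^2 := by nlinarith
      have hyθ : y ≤ θ := by
        rw [hy, hθ, div_le_div_iff₀ (by positivity) (by positivity)]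
        nlinarith [mul_le_mul_of_nonneg_right hδ4t (sq_nonneg s)]
      have hEy : Real.exp (y-2) ≤ E :=
        le_trans (Real.exp_le_exp.mpr (by linarith)) hEθ
      have h6 : y^6 ≤ 40095*E^2 := (expPoly hy1 hEy).1
      have hys : y * s^2 = δ^2/4 := by rw [hy]; field_simp
      -- squared inequality
      have hsq : (8*δ)^2 ≤ (E * ε^2 * s^5)^2 := by
        have e1 : (E * ε^2 * s^5)^2 = E^2 * ε^4 * (s^2)^5 := by ring
        have e2 : y^6 * (s^2)^5 = y * (y*s^2)^5 := by ring
        have e3 : y * (y*s^2)^5 = y * (δ^2/4)^5 := by rw [hys]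
        have e4 : (δ^2/4)^5 ≤ y * (δ^2/4)^5 := by nlinarith [pow_pos (by positivity : (0:ℝ) < δ^2/4) 5]
        have e5 : ε^4 * δ^8 = (ε*δ^2)^4 := by ring
        have e6 : (1500:ℝ)^4 ≤ (ε*δ^2)^4 := by
          refine pow_le_pow_left₀ (by norm_num) hbig 4
        have hy6pos : 0 ≤ y^6 * (s^2)^5 := by positivity
        have h7 : y^6 * (s^2)^5 ≤ 40095 * E^2 * (s^2)^5 := by
          nlinarith [pow_pos (pow_pos hspos 2) 5]
        -- y^6 (s²)⁵ ≥ (δ²/4)^5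
        have h8 : (δ^2/4)^5 ≤ 40095 * E^2 * (s^2)^5 := by
          calc (δ^2/4)^5 ≤ y * (δ^2/4)^5 := e4
            _ = y^6 * (s^2)^5 := by rw [e2, e3]
            _ ≤ 40095 * E^2 * (s^2)^5 := h7
        -- multiply by ε^4 : E²ε⁴(s²)⁵ ≥ ε⁴δ^10/(4^5·40095)
        rw [e1]
        have h9 : ε^4 * (δ^2/4)^5 ≤ 40095 * (E^2 * ε^4 * (s^2)^5) := by
          nlinarith [pow_pos hεpos 4]
        have h10 : (ε*δ^2)^4 * δ^2 / 1024 ≤ ε^4 * (δ^2/4)^5 := by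
          have : ε^4 * (δ^2/4)^5 = (ε*δ^2)^4 * δ^2 / 1024 := by ring
          linarith [this.ge]
        nlinarith [e6, pow_pos hδ0 2, sq_nonneg δ]
      nlinarith [hsq, mul_pos (mul_pos hE0 (pow_pos hεpos 2)) (pow_pos hspos 5), hδ0]
    · have h5 : (δ/2)^5 ≤ s^5 := pow_le_pow_left₀ (by positivity) h.le 5
      have e6 : (1500:ℝ)^2 ≤ (ε*δ^2)^2 := pow_le_pow_left₀ (by norm_num) hbig 2
      have e7 : (ε*δ^2)^2 = ε^2*δ^4 := by ring
      have hb1 : ε^2*(δ/2)^5 ≤ ε^2*s^5 := mul_le_mul_of_nonneg_left h5 (pow_pos hεpos 2).le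
      have hb2 : ε^2*s^5 ≤ E*(ε^2*s^5) := by
        nlinarith [mul_pos (pow_pos hεpos 2) (pow_pos hspos 5)]
      have hb3 : ε^2*(δ/2)^5 = ε^2*δ^4*δ/32 := by ring
      have hb4 : 1500^2*δ ≤ ε^2*δ^4*δ := by
        have := mul_le_mul_of_nonneg_right e6 hδ0.le
        nlinarith
      linarith
  -- Condition D : 2*A^3 ≤ E^2 * ε^3 * s^3
  have condD : 2*A^3 ≤ E^2 * ε^3 * s^3 := by
    have hmain : 16*δ^6 ≤ E^2 * ε^3 * s^12 := by
      rcases le_or_gt s (δ/2) with h | h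
      · set y : ℝ := δ^2/(4*s^2) with hy
        have hy1 : 1 ≤ y := by
          rw [hy, le_div_iff₀ (by positivity)]; nlinarith
        have h2t : δ ≤ 2*t := by rw [hts]; linarith
        have hδ4t : δ^2 ≤ 4*t^2 := by nlinarith
        have hyθ : y ≤ θ := by
          rw [hy, hθ, div_le_div_iff₀ (by positivity) (by positivity)]
          nlinarith [mul_le_mul_of_nonneg_right hδ4t (sq_nonneg s)]
        have hEy : Real.exp (y-2) ≤ E :=
          le_trans (Real.exp_le_exp.mpr (by linarith)) hEθ
        have h6 : y^6 ≤ 40095*E^2 := (expPoly hy1 hEy).1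
        have hys : y * s^2 = δ^2/4 := by rw [hy]; field_simp
        have e2 : y^6 * s^12 = (y*s^2)^6 := by ring
        have e3 : (y*s^2)^6 = (δ^2/4)^6 := by rw [hys]
        have h7 : (δ^2/4)^6 ≤ 40095 * E^2 * s^12 := by
          calc (δ^2/4)^6 = y^6 * s^12 := by rw [← e3, ← e2]
            _ ≤ 40095 * E^2 * s^12 := by nlinarith [pow_pos hspos 12]
        have e6 : (1500:ℝ)^3 ≤ (ε*δ^2)^3 := pow_le_pow_left₀ (by norm_num) hbig 3
        have e7 : (ε*δ^2)^3 = ε^3*δ^6 := by ring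
        have h8 : ε^3 * (δ^2/4)^6 ≤ 40095 * (E^2 * ε^3 * s^12) := by
          nlinarith [pow_pos hεpos 3]
        have h9 : ε^3 * (δ^2/4)^6 = (ε*δ^2)^3 * δ^6 / 4096 := by ring
        nlinarith [pow_pos hδ0 6]
      · have h12 : (δ/2)^12 ≤ s^12 := pow_le_pow_left₀ (by positivity) h.le 12
        have e6 : (1500:ℝ)^3 ≤ (ε*δ^2)^3 := pow_le_pow_left₀ (by norm_num) hbig 3
        have e7 : (ε*δ^2)^3 = ε^3*δ^6 := by ring
        have hE2 : 1 ≤ E^2 := by nlinarith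
        have hb1 : ε^3*(δ/2)^12 ≤ ε^3*s^12 := mul_le_mul_of_nonneg_left h12 (pow_pos hεpos 3).le
        have hb2 : ε^3*s^12 ≤ E^2*(ε^3*s^12) := by
          nlinarith [mul_pos (pow_pos hεpos 3) (pow_pos hspos 12)]
        have hb3 : ε^3*(δ/2)^12 = (ε^3*δ^6)*δ^6/4096 := by ring
        have hb4 : 1500^3*δ^6 ≤ (ε^3*δ^6)*δ^6 := by
          have := mul_le_mul_of_nonneg_right e6 (pow_pos hδ0 6).le
          nlinarith
        linarith [pow_pos hδ0 6]
    -- divide by s^9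
    have h9 : (0:ℝ) < s^9 := pow_pos hspos 9
    rw [← mul_le_mul_iff_of_pos_right h9]
    have e1 : 2*A^3 * s^9 = 2*(A*s^3)^3 := by ring
    have e2 : 2*(A*s^3)^3 ≤ 2*(2*δ^2)^3 := by
      have h0 : 0 ≤ A*s^3 := by positivity
      nlinarith [pow_le_pow_left₀ h0 hAle 3]
    have e3 : (2:ℝ)*(2*δ^2)^3 = 16*δ^6 := by ring
    have e4 : E^2*ε^3*s^3*s^9 = E^2*ε^3*s^12 := by ring
    linarith [e1.le, e1.ge]
  -- Assembly
  have hkey1 : 3*(A*P)/s ≤ E*ε*s*(A*P) := by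
    rw [div_le_iff₀ hspos]
    nlinarith [mul_le_mul_of_nonneg_right condA (mul_nonneg hA0 hP0)]
  have hkey2 : 4*δ/s^3 ≤ E*ε^2*s^2/2 := by
    rw [div_le_div_iff₀ (pow_pos hspos 3) (by norm_num : (0:ℝ) < 2)]
    nlinarith
  have hkey3 : A^2*Q ≤ E*ε*s*(A*P) + E*ε^2*s^2/2 := by
    rcases eq_or_lt_of_le hA0 with h0 | hApos
    · rw [← h0]; ring_nf
      positivity
    · have h3' : A^2*Q ≤ E*ε*s*(A*(Q^2/2)) + E*ε^2*s^2/2 := by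
        have hden : (0:ℝ) < 2*E*A*ε*s := by positivity
        rw [← mul_le_mul_iff_of_pos_left hden]
        have hDA : 2*A^4 ≤ E^2*ε^3*s^3*A := by nlinarith
        nlinarith [sq_nonneg (E*A*ε*s*Q - A^2)]
      have h3'' : E*ε*s*(A*(Q^2/2)) ≤ E*ε*s*(A*P) := by
        have : A*(Q^2/2) ≤ A*P := by nlinarith
        nlinarith [mul_pos (mul_pos hE0 hεpos) hspos]
      linarith
  have hid : 6*t*δ/s^4*P = 3*(A*P)/s := by
    rw [hA]; field_simp; ring
  have hBP : (2*δ/s^3)*P ≤ 4*δ/s^3 := by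
    have h0 : 0 ≤ δ/s^3 := by positivity
    have e : (2*δ/s^3)*P = 2*(δ/s^3)*P := by ring
    have e2 : (4:ℝ)*δ/s^3 = 4*(δ/s^3) := by ring
    rw [e, e2]; nlinarith
  have hexp : (A*P + ε*s)^2 * E = E*(A*P)^2 + 2*(E*ε*s*(A*P)) + E*ε^2*s^2 := by ring
  have hfin : (2*δ/s^3 + 6*t*δ/s^4)*P = (2*δ/s^3)*P + 6*t*δ/s^4*P := by ring
  rw [hfin, hexp, hid]
  have h1 : 0 ≤ E*(A*P)^2 := by positivity
  have h2 : 0 ≤ A*P := mul_nonneg hA0 hP0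
  have h3 : 0 < ε*s := mul_pos hεpos hspos
  linarith


lemma U_nonneg (hM : 0 < M) {t : ℝ} (ht0 : 0 ≤ t) (ht : t < del M) : 0 ≤ U M t := by
  have hδ := del_pos hM
  have hph : 0 ≤ ph M t := sq_nonneg _
  have hs2 : (del M - t)^2 ≤ (del M)^2 := by nlinarith
  have h2 : 0 ≤ (M/(del M)) * ((del M)^2 - (del M - t)^2)/2 := by
    have h0 : 0 ≤ (del M)^2 - (del M - t)^2 := by linarith
    positivity
  unfold U
  rcases le_or_gt (ph M t) 2 with h|h
  · nlinarith [Real.one_sub_sq_div_two_le_cos (x := ph M t)]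
  · nlinarith [Real.neg_one_le_cos (ph M t)]

lemma U_ge (hM : 0 < M) {t : ℝ} (ht0 : 0 ≤ t) (ht : t < del M) : ph M t - 2 ≤ U M t := by
  have hδ := del_pos hM
  have hs2 : (del M - t)^2 ≤ (del M)^2 := by nlinarith
  have h2 : 0 ≤ (M/(del M)) * ((del M)^2 - (del M - t)^2)/2 := by
    have h0 : 0 ≤ (del M)^2 - (del M - t)^2 := by linarith
    positivity
  unfold U
  nlinarith [Real.neg_one_le_cos (ph M t)]

lemma main_ineq (hM : 0 < M) {t : ℝ} (ht0 : 0 ≤ t) (ht : t < del M) :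
    sol' M t ≤ sol M t + (sol M t)^2 * Real.exp (U M t) := by
  have hδ := del_pos hM
  have hδ1 : 1 ≤ del M := by linarith [del_ge hM]
  have hspos : (0:ℝ) < del M - t := by linarith
  have hbig : 1500 ≤ (M/(del M)) * (del M)^2 := by
    have : (M/(del M)) * (del M)^2 = M * del M := by field_simp
    rw [this]; exact del_big hM
  have h := core (del M) (del M - t) t (M/(del M)) (ph M t) (am M t)
    (1 - Real.sin (ph M t)) (-Real.cos (ph M t)) (Real.exp (U M t))
    hδ1 hbig hspos (by linarith) (by ring) ht0 (by positivity)
    (by unfold ph; rw [div_pow])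
    rfl
    (by nlinarith [Real.sin_le_one (ph M t)])
    (by nlinarith [Real.neg_one_le_sin (ph M t)])
    (by nlinarith [Real.sin_sq_add_cos_sq (ph M t)])
    (Real.one_le_exp (U_nonneg hM ht0 ht))
    (Real.exp_le_exp.mpr (U_ge hM ht0 ht))
  calc sol' M t
      = (2*(del M)/(del M - t)^3 + 6*t*(del M)/(del M - t)^4) * (1 - Real.sin (ph M t))
        + (am M t)^2 * (-Real.cos (ph M t)) - M/(del M) := by unfold sol'; ring
    _ ≤ (am M t * (1 - Real.sin (ph M t)) + (M/(del M))*(del M - t))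
        + (am M t * (1 - Real.sin (ph M t)) + (M/(del M))*(del M - t))^2
          * Real.exp (U M t) := by linarith
    _ = sol M t + (sol M t)^2 * Real.exp (U M t) := by unfold sol; ring

-- ### regularity

lemma contDiffOn_sol (hM : 0 < M) : ContDiffOn ℝ 1 (sol M) (Set.Iio (del M)) := by
  have hden : ∀ t ∈ Set.Iio (del M), del M - t ≠ 0 := by
    intro t ht; simp only [mem_Iio] at ht; intro h; linarith
  have c1 : ContDiffOn ℝ 1 (fun t : ℝ => del M - t) (Set.Iio (del M)) :=
    (contDiff_const.sub contDiff_id).contDiffOn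
  have cph : ContDiffOn ℝ 1 (ph M) (Set.Iio (del M)) := by
    unfold ph
    exact (contDiffOn_id.div c1 hden).pow 2
  have csin : ContDiffOn ℝ 1 (fun t => Real.sin (ph M t)) (Set.Iio (del M)) :=
    Real.contDiff_sin.comp_contDiffOn cph
  have cam : ContDiffOn ℝ 1 (am M) (Set.Iio (del M)) := by
    unfold am
    refine ContDiffOn.div ?_ (c1.pow 3) ?_
    · exact ((contDiff_const.mul contDiff_id).mul contDiff_const).contDiffOn
    · intro t ht; exact pow_ne_zero 3 (hden t ht)
  unfold sol
  exact (cam.mul (contDiffOn_const.sub csin)).add (contDiffOn_const.mul c1)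

lemma sol_cont (hM : 0 < M) : ContinuousOn (sol M) (Set.Iio (del M)) :=
  (contDiffOn_sol hM).continuousOn

lemma sol_pos (hM : 0 < M) {t : ℝ} (ht0 : 0 ≤ t) (ht : t < del M) : 0 < sol M t := by
  have hδ := del_pos hM
  have h4 : 0 < del M - t := by linarith
  have h1 : 0 ≤ am M t := by
    unfold am
    exact div_nonneg (by nlinarith) (pow_pos h4 3).le
  have h2 : 0 ≤ 1 - Real.sin (ph M t) := by nlinarith [Real.sin_le_one (ph M t)]
  have h3 : 0 < (M/(del M)) * (del M - t) := by
    have h4 : 0 < del M - t := by linarith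
    exact mul_pos (div_pos hM hδ) h4
  unfold sol; nlinarith

lemma sol_zero (hM : 0 < M) : sol M 0 = M := by
  have hδ := (del_pos hM).ne'
  unfold sol am ph
  simp [hδ]

lemma U_zero (hM : 0 < M) : U M 0 = 0 := by
  have hδ := (del_pos hM).ne'
  unfold U ph
  simp [hδ]

lemma integral_sol (hM : 0 < M) {t : ℝ} (ht0 : 0 ≤ t) (ht : t < del M) :
    ∫ r in (0:ℝ)..t, sol M r = U M t := by
  have hδ := del_pos hM
  have h1 : ∀ r ∈ Set.uIcc (0:ℝ) t, HasDerivAt (U M) (sol M r) r := by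
    intro r hr
    rw [Set.uIcc_of_le ht0] at hr
    exact hasDerivAt_U (lt_of_le_of_lt hr.2 ht)
  have h2 : IntervalIntegrable (sol M) MeasureTheory.volume 0 t := by
    apply ContinuousOn.intervalIntegrable
    apply (sol_cont hM).mono
    rw [Set.uIcc_of_le ht0]
    intro r hr
    exact lt_of_le_of_lt hr.2 ht
  have := intervalIntegral.integral_eq_sub_of_hasDerivAt h1 h2
  rw [this, U_zero hM, sub_zero]

-- ### the sampling points

lemma one_add_sqrt_pos (φ : ℝ) : 0 < 1 + Real.sqrt φ := by positivity

lemma tau_nonneg (hM : 0 < M) (φ : ℝ) : 0 ≤ tau M φ := by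
  have := del_pos hM; unfold tau; positivity

lemma tau_lt (hM : 0 < M) (φ : ℝ) : tau M φ < del M := by
  have hδ := del_pos hM
  have h1 := one_add_sqrt_pos φ
  unfold tau
  rw [div_lt_iff₀ h1]
  nlinarith [Real.sqrt_nonneg φ]

lemma tau_sub (hM : 0 < M) (φ : ℝ) : del M - tau M φ = del M / (1 + Real.sqrt φ) := by
  have hδ := del_pos hM
  have h1 := (one_add_sqrt_pos φ).ne'
  unfold tau
  field_simp
  ring

lemma ph_tau (hM : 0 < M) {φ : ℝ} (hφ : 0 ≤ φ) : ph M (tau M φ) = φ := by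
  have hδ := (del_pos hM).ne'
  have h1 := (one_add_sqrt_pos φ).ne'
  have h2 : tau M φ = Real.sqrt φ * (del M / (1 + Real.sqrt φ)) := by
    unfold tau; field_simp
  have h3 : del M / (1 + Real.sqrt φ) ≠ 0 := by
    apply div_ne_zero hδ h1
  unfold ph
  rw [tau_sub hM, h2, mul_div_assoc, div_self h3, mul_one, Real.sq_sqrt hφ]

lemma am_tau (hM : 0 < M) {φ : ℝ} (hφ : 0 ≤ φ) :
    am M (tau M φ) = 2 * Real.sqrt φ * (1 + Real.sqrt φ)^2 / del M := by
  have hδ := (del_pos hM).ne'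
  have h1 := (one_add_sqrt_pos φ).ne'
  unfold am
  rw [tau_sub hM]
  unfold tau
  rw [div_pow]
  field_simp

lemma sol_tau (hM : 0 < M) {φ : ℝ} (hφ : 0 ≤ φ) :
    sol M (tau M φ) = am M (tau M φ) * (1 - Real.sin φ) + M / (1 + Real.sqrt φ) := by
  have hδ := (del_pos hM).ne'
  have h1 := (one_add_sqrt_pos φ).ne'
  unfold sol
  rw [ph_tau hM hφ, tau_sub hM]
  congr 1
  field_simp

lemma am_tau_ge (hM : 0 < M) {φ : ℝ} (hφ : 1 ≤ φ) : 2*φ/del M ≤ am M (tau M φ) := by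
  have hδ := del_pos hM
  rw [am_tau hM (by linarith)]
  have hr : 1 ≤ Real.sqrt φ := by
    rw [show (1:ℝ) = Real.sqrt 1 by simp]
    exact Real.sqrt_le_sqrt hφ
  have hrsq : Real.sqrt φ ^ 2 = φ := Real.sq_sqrt (by linarith)
  rw [div_le_div_iff₀ hδ hδ]
  have key : φ ≤ Real.sqrt φ * (1 + Real.sqrt φ)^2 := by
    nlinarith [Real.sqrt_nonneg φ]
  nlinarith [mul_le_mul_of_nonneg_right key hδ.le]


-- sampling phases
noncomputable def Kn (M : ℝ) (n : ℕ) : ℕ := n^2 + ⌈M * del M⌉₊ + 1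
noncomputable def pha (M : ℝ) (n : ℕ) : ℝ := π/2 + (Kn M n : ℝ) * (2*π)
noncomputable def phb (M : ℝ) (n : ℕ) : ℝ := π + (Kn M n : ℝ) * (2*π)
noncomputable def aseq (M : ℝ) (n : ℕ) : ℝ := tau M (pha M n)
noncomputable def bseq (M : ℝ) (n : ℕ) : ℝ := tau M (phb M n)

lemma Kn_ge_sq (n : ℕ) : ((n:ℝ))^2 ≤ (Kn M n : ℝ) := by
  unfold Kn; push_cast; nlinarith [(by positivity : (0:ℝ) ≤ (⌈M * del M⌉₊:ℝ))]

lemma Kn_ge_Mdel (hM : 0 < M) (n : ℕ) : M * del M ≤ (Kn M n : ℝ) := by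
  unfold Kn; push_cast
  nlinarith [Nat.le_ceil (M * del M), (by positivity : (0:ℝ) ≤ ((n^2:ℕ):ℝ))]

lemma Kn_ge_one (n : ℕ) : (1:ℝ) ≤ (Kn M n : ℝ) := by
  unfold Kn; push_cast; nlinarith [(by positivity : (0:ℝ) ≤ ((n^2:ℕ):ℝ)), (by positivity : (0:ℝ) ≤ (⌈M * del M⌉₊:ℝ))]

lemma pha_pos (n : ℕ) : 1 ≤ pha M n := by
  unfold pha
  nlinarith [Real.pi_gt_three, Kn_ge_one (M := M) n]

lemma pha_ge_sq (n : ℕ) : ((n:ℝ))^2 ≤ pha M n := by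
  unfold pha
  nlinarith [Real.pi_gt_three, Kn_ge_sq (M := M) n, Kn_ge_one (M := M) n]

lemma phb_pos (n : ℕ) : 1 ≤ phb M n := by
  unfold phb
  nlinarith [Real.pi_gt_three, Kn_ge_one (M := M) n]

lemma phb_ge_sq (n : ℕ) : ((n:ℝ))^2 ≤ phb M n := by
  unfold phb
  nlinarith [Real.pi_gt_three, Kn_ge_sq (M := M) n, Kn_ge_one (M := M) n]

lemma phb_ge_Mdel (hM : 0 < M) (n : ℕ) : 6 * (M * del M) ≤ phb M n := by
  unfold phb
  nlinarith [Real.pi_gt_three, Kn_ge_Mdel hM n, Kn_ge_one (M := M) n,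
    mul_pos hM (del_pos hM)]

lemma sin_pha (n : ℕ) : Real.sin (pha M n) = 1 := by
  unfold pha
  rw [Real.sin_add_nat_mul_two_pi, Real.sin_pi_div_two]

lemma sin_phb (n : ℕ) : Real.sin (phb M n) = 0 := by
  unfold phb
  rw [Real.sin_add_nat_mul_two_pi, Real.sin_pi]

lemma pha_lt_phb (n : ℕ) : pha M n < phb M n := by
  unfold pha phb
  nlinarith [Real.pi_gt_three]

lemma sqrt_pha_ge (n : ℕ) : (n:ℝ) ≤ Real.sqrt (pha M n) := by
  have h := Real.sqrt_le_sqrt (pha_ge_sq (M := M) n)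
  rwa [Real.sqrt_sq (Nat.cast_nonneg n)] at h

lemma sqrt_phb_ge (n : ℕ) : (n:ℝ) ≤ Real.sqrt (phb M n) := by
  have h := Real.sqrt_le_sqrt (phb_ge_sq (M := M) n)
  rwa [Real.sqrt_sq (Nat.cast_nonneg n)] at h

lemma sol_aseq (hM : 0 < M) (n : ℕ) : sol M (aseq M n) = M / (1 + Real.sqrt (pha M n)) := by
  unfold aseq
  rw [sol_tau hM (by linarith [pha_pos (M := M) n]), sin_pha]
  ring

lemma sol_aseq_le (hM : 0 < M) (n : ℕ) : sol M (aseq M n) ≤ M / (n + 1) := by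
  rw [sol_aseq hM n]
  have h1 : (n:ℝ) + 1 ≤ 1 + Real.sqrt (pha M n) := by
    linarith [sqrt_pha_ge (M := M) n]
  gcongr

lemma sol_bseq_ge (hM : 0 < M) (n : ℕ) : M / (n + 1) ≤ sol M (bseq M n) := by
  have hδ := del_pos hM
  have h1 : 1 ≤ phb M n := phb_pos n
  have h2 : 2 * phb M n / del M ≤ am M (tau M (phb M n)) := am_tau_ge hM h1
  have h3 : 6 * (M * del M) ≤ phb M n := phb_ge_Mdel hM n
  have h4 : M ≤ 2 * phb M n / del M := by
    rw [le_div_iff₀ hδ]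
    nlinarith
  have h5 : sol M (bseq M n) = am M (tau M (phb M n)) + M / (1 + Real.sqrt (phb M n)) := by
    unfold bseq
    rw [sol_tau hM (by linarith), sin_phb]
    ring
  have h6 : 0 < M / (1 + Real.sqrt (phb M n)) := div_pos hM (one_add_sqrt_pos _)
  have h7 : M / (n+1) ≤ M := by
    apply div_le_self hM.le
    have : (0:ℝ) ≤ (n:ℝ) := Nat.cast_nonneg n
    linarith
  linarith

lemma tau_strict_mono (hM : 0 < M) {φ ψ : ℝ} (hφ : 0 ≤ φ) (h : φ < ψ) :
    tau M φ < tau M ψ := by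
  have hδ := del_pos hM
  have hr : Real.sqrt φ < Real.sqrt ψ := Real.sqrt_lt_sqrt hφ h
  have h1 := one_add_sqrt_pos φ
  have h2 := one_add_sqrt_pos ψ
  unfold tau
  rw [div_lt_div_iff₀ h1 h2]
  nlinarith [Real.sqrt_nonneg φ, Real.sqrt_nonneg ψ]

lemma aseq_lt_bseq (hM : 0 < M) (n : ℕ) : aseq M n < bseq M n :=
  tau_strict_mono hM (by linarith [pha_pos (M := M) n]) (pha_lt_phb n)

-- lower bounds for the sequences
lemma bseq_ge (hM : 0 < M) (n : ℕ) : del M - del M/(n+1) ≤ bseq M n := by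
  have hδ := del_pos hM
  have h1 : del M - bseq M n = del M / (1 + Real.sqrt (phb M n)) := tau_sub hM _
  have h2 : del M / (1 + Real.sqrt (phb M n)) ≤ del M / (n+1) := by
    have h3 : (n:ℝ) + 1 ≤ 1 + Real.sqrt (phb M n) := by linarith [sqrt_phb_ge (M := M) n]
    gcongr
  linarith

lemma aseq_ge (hM : 0 < M) (n : ℕ) : del M - del M/(n+1) ≤ aseq M n := by
  have hδ := del_pos hM
  have h1 : del M - aseq M n = del M / (1 + Real.sqrt (pha M n)) := tau_sub hM _
  have h2 : del M / (1 + Real.sqrt (pha M n)) ≤ del M / (n+1) := by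
    have h3 : (n:ℝ) + 1 ≤ 1 + Real.sqrt (pha M n) := by linarith [sqrt_pha_ge (M := M) n]
    gcongr
  linarith

lemma tendsto_low (hM : 0 < M) :
    Tendsto (fun n : ℕ => del M - del M/(n+1)) atTop (𝓝 (del M)) := by
  have h1 : Tendsto (fun n : ℕ => del M/((n:ℝ)+1)) atTop (𝓝 0) := by
    have h2 : Tendsto (fun n : ℕ => 1/((n:ℝ)+1)) atTop (𝓝 0) :=
      tendsto_one_div_add_atTop_nhds_zero_nat
    have h3 := h2.const_mul (del M)
    simp only [mul_zero] at h3
    convert h3 using 2 with n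
    field_simp
  have h4 := (tendsto_const_nhds (x := del M) (f := atTop (α := ℕ))).sub h1
  simpa using h4

-- limsup
lemma limsup_top (hM : 0 < M) :
    Filter.limsup (fun t => ((sol M t : ℝ) : EReal)) (nhdsWithin (del M) (Set.Iio (del M))) = ⊤ := by
  have hδ := del_pos hM
  rw [EReal.eq_top_iff_forall_lt]
  intro y
  have hbt : Tendsto (bseq M) atTop (𝓝 (del M)) := by
    apply tendsto_of_tendsto_of_tendsto_of_le_of_le (tendsto_low hM) tendsto_const_nhds
    · exact fun n => bseq_ge hM n
    · exact fun n => (tau_lt hM _).le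
  have hbtw : Tendsto (bseq M) atTop (nhdsWithin (del M) (Set.Iio (del M))) := by
    apply tendsto_nhdsWithin_of_tendsto_nhds_of_eventually_within _ hbt
    exact Eventually.of_forall (fun n => tau_lt hM _)
  have hev : ∀ᶠ n : ℕ in atTop, y + 1 ≤ sol M (bseq M n) := by
    rw [eventually_atTop]
    refine ⟨⌈(y+1) * del M⌉₊ + 1, fun n hn => ?_⟩
    have h1 : 1 ≤ phb M n := phb_pos n
    have h2 : 2 * phb M n / del M ≤ am M (tau M (phb M n)) := am_tau_ge hM h1
    have hn1 : ((⌈(y+1) * del M⌉₊ : ℝ)) + 1 ≤ (n:ℝ) := by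
      have := Nat.cast_le (α := ℝ) |>.mpr hn
      push_cast at this ⊢
      linarith
    have hceil : (y+1) * del M ≤ (⌈(y+1) * del M⌉₊ : ℝ) := Nat.le_ceil _
    have hnn : (y+1) * del M ≤ (n:ℝ) := by linarith
    have hsq : ((n:ℝ))^2 ≤ phb M n := phb_ge_sq n
    have hnpos : (0:ℝ) ≤ (n:ℝ) := Nat.cast_nonneg n
    have h4 : (y+1) ≤ 2 * phb M n / del M := by
      rw [le_div_iff₀ hδ]
      rcases le_or_gt (y+1) 0 with hy | hy
      · nlinarith
      · nlinarith [sq_nonneg ((n:ℝ) - (y+1)*del M)]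
    have h5 : sol M (bseq M n) = am M (tau M (phb M n)) + M / (1 + Real.sqrt (phb M n)) := by
      unfold bseq
      rw [sol_tau hM (by linarith), sin_phb]
      ring
    have h6 : 0 < M / (1 + Real.sqrt (phb M n)) := div_pos hM (one_add_sqrt_pos _)
    linarith
  have hfreq : ∃ᶠ t in nhdsWithin (del M) (Set.Iio (del M)),
      (((y+1 : ℝ)) : EReal) ≤ ((sol M t : ℝ) : EReal) := by
    apply hbtw.frequently
    apply hev.frequently.mono
    intro n hn
    exact_mod_cast EReal.coe_le_coe_iff.mpr hn
  have h1 := le_limsup_of_frequently_le' hfreq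
  refine lt_of_lt_of_le ?_ h1
  exact_mod_cast EReal.coe_lt_coe_iff.mpr (lt_add_one y)

-- the sequence tn
lemma exists_tn (hM : 0 < M) :
    ∃ tn : ℕ → ℝ, (∀ n, tn n ∈ Set.Ico (0:ℝ) (del M)) ∧
      Filter.Tendsto tn Filter.atTop (nhds (del M)) ∧
      ∀ n : ℕ, sol M (tn n) = M / (n + 1) := by
  have hδ := del_pos hM
  have H : ∀ n : ℕ, ∃ t, t ∈ Set.Icc (aseq M n) (bseq M n) ∧ sol M t = M / (n+1) := by
    intro n
    have hab := (aseq_lt_bseq hM n).le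
    have hsub : Set.Icc (aseq M n) (bseq M n) ⊆ Set.Iio (del M) := by
      intro t ht
      exact lt_of_le_of_lt ht.2 (tau_lt hM _)
    have hcont : ContinuousOn (sol M) (Set.Icc (aseq M n) (bseq M n)) :=
      (sol_cont hM).mono hsub
    have hmem : M / (n+1) ∈ Set.Icc (sol M (aseq M n)) (sol M (bseq M n)) :=
      ⟨sol_aseq_le hM n, sol_bseq_ge hM n⟩
    have := intermediate_value_Icc hab hcont hmem
    obtain ⟨t, ht1, ht2⟩ := this
    exact ⟨t, ht1, ht2⟩
  choose tn h1 h2 using H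
  refine ⟨tn, fun n => ?_, ?_, h2⟩
  · constructor
    · exact le_trans (tau_nonneg hM _) (h1 n).1
    · exact lt_of_le_of_lt (h1 n).2 (tau_lt hM _)
  · apply tendsto_of_tendsto_of_tendsto_of_le_of_le (tendsto_low hM) tendsto_const_nhds
    · intro n
      exact le_trans (aseq_ge hM n) (h1 n).1
    · intro n
      exact (lt_of_le_of_lt (h1 n).2 (tau_lt hM _)).le


end Osc

open Osc in
/-- For every `M > 0` there exist `T* > 0` and a `C¹` function
`x : [0, T*) → (0, ∞)` with `x 0 = M`, satisfying the Gronwall-type inequality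
`x' t ≤ x t + (x t)^2 * exp (∫₀ᵗ x)` on `[0, T*)`, with
`limsup_{t → T*⁻} x t = ∞`, and with a sequence `t n → T*⁻` such that
`x (t n) = M / (n + 1)`. -/
theorem oscillating_solution_exists (M : ℝ) (hM : 0 < M) :
    ∃ T : ℝ, 0 < T ∧ ∃ x : ℝ → ℝ,
      ContDiffOn ℝ 1 x (Set.Ico 0 T) ∧
      (∀ t ∈ Set.Ico (0:ℝ) T, 0 < x t) ∧
      x 0 = M ∧
      (∀ t ∈ Set.Ico (0:ℝ) T,
        derivWithin x (Set.Ico 0 T) t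
          ≤ x t + (x t) ^ 2 * Real.exp (∫ s in (0:ℝ)..t, x s)) ∧
      Filter.limsup (fun t => (x t : EReal)) (nhdsWithin T (Set.Iio T)) = ⊤ ∧
      ∃ tn : ℕ → ℝ, (∀ n, tn n ∈ Set.Ico (0:ℝ) T) ∧
        Filter.Tendsto tn Filter.atTop (nhds T) ∧
        ∀ n : ℕ, x (tn n) = M / (n + 1) := by
  refine ⟨del M, del_pos hM, sol M, ?_, ?_, sol_zero hM, ?_, limsup_top hM, exists_tn hM⟩
  · exact (contDiffOn_sol hM).mono (fun t ht => ht.2)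
  · exact fun t ht => sol_pos hM ht.1 ht.2
  · intro t ht
    have hd : derivWithin (sol M) (Set.Ico 0 (del M)) t = sol' M t :=
      (hasDerivAt_sol ht.2).hasDerivWithinAt.derivWithin (uniqueDiffOn_Ico 0 (del M) t ht)
    rw [hd, integral_sol hM ht.1 ht.2]
    exact main_ineq hM ht.1 ht.2
end

section
/- For every real number M > 0 there exist a time T* = T*(M) > 0 and a continuously differentiable function x : [0, T*) → (0, ∞) such that x(0) = M, x'(t) ≤ x(t) + x(t)² · exp(∫₀ᵗ x(s) ds) for all t ∈ [0, T*), limsup_{t → T*⁻} x(t) = ∞, and liminf_{t → T*⁻} x(t) = 0. -/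
open Set Filter MeasureTheory

private lemma core_abs (q c s d E X : ℝ) (hq0 : 0 < q) (hc : 0 ≤ c) (hd : 0 < d) (hE : 0 < E)
    (hX : X = 3*q*c) (hqd : q ≤ d*E) (hcube : 6*q^3 ≤ d^3*E^2) (hs2c : s^2 ≤ 2*c) :
    3*q^2*(c+s) ≤ (3*q*c+d)^2*E := by
  have hX0 : 0 ≤ X := by rw [hX]; positivity
  have hA : 3*q^2*c ≤ X*d*E := by
    calc 3*q^2*c = q*X := by rw [hX]; ring
    _ ≤ (d*E)*X := mul_le_mul_of_nonneg_right hqd hX0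
    _ = X*d*E := by ring
  have hB : 3*q^2*s ≤ (X^2/4 + 3*d^2/4)*E := by
    rcases le_or_gt s 0 with h|h
    · have h1 : 3*q^2*s ≤ 0 := by nlinarith [sq_nonneg q]
      have h2 : 0 ≤ (X^2/4 + 3*d^2/4)*E := by positivity
      linarith
    · have hL0 : 0 ≤ 3*q^2*s := by positivity
      have hsq : (3*q^2*s)^2 ≤ ((X^2/4 + 3*d^2/4)*E)^2 := by
        have h2 : 9*q^4*s^2 ≤ 9*q^4*(2*c) := by nlinarith [pow_pos hq0 4]
        have h3 : 9*q^4*(2*c) = (6*q^3)*X := by rw [hX]; ring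
        have h4 : (6*q^3)*X ≤ (d^3*E^2)*X := mul_le_mul_of_nonneg_right hcube hX0
        have h5 : d^3*X ≤ (X^2/4 + 3*d^2/4)^2 := by
          nlinarith [mul_nonneg (sq_nonneg (X-d)) (show (0:ℝ) ≤ X^2+2*X*d+9*d^2 by positivity)]
        have h6 : (d^3*E^2)*X ≤ ((X^2/4 + 3*d^2/4)*E)^2 := by
          have := mul_le_mul_of_nonneg_right h5 (sq_nonneg E)
          nlinarith [this]
        nlinarith [h2, h4, h6]
      exact le_of_pow_le_pow_left₀ two_ne_zero (by positivity) hsq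
  have hfin : (3*q*c+d)^2*E = X^2*E + 2*(X*d*E) + d^2*E := by rw [hX]; ring
  have p1 : 0 ≤ X*d*E := by positivity
  have p2 : 0 ≤ X^2*E := by positivity
  have p3 : 0 ≤ d^2*E := by positivity
  nlinarith [hA, hB]

private lemma core_theta (M θ : ℝ) (hM : 0 < M) (hθ : 0 ≤ θ) :
    3*(M*Real.exp (-2)/2*Real.exp θ)^2*((1 - Real.cos θ) + Real.sin θ)
      ≤ (3*(M*Real.exp (-2)/2*Real.exp θ)*(1 - Real.cos θ) + M*Real.exp (-θ))^2
          * Real.exp (3*(θ - Real.sin θ)) := by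
  have hsin1 : Real.sin θ ≤ 1 := Real.sin_le_one θ
  have hsin1' : -1 ≤ Real.sin θ := Real.neg_one_le_sin θ
  have hsinθ : Real.sin θ ≤ θ := Real.sin_le hθ
  have h3s : 3*Real.sin θ ≤ 2 + θ := by
    rcases le_total θ 1 with h|h
    · linarith
    · linarith
  have hqd : M*Real.exp (-2)/2*Real.exp θ ≤ (M*Real.exp (-θ))*(Real.exp (3*(θ - Real.sin θ))) := by
    have e1 : Real.exp (-2) * Real.exp θ = Real.exp (-2 + θ) := (Real.exp_add _ _).symm
    have e2 : Real.exp (-θ) * Real.exp (3*(θ - Real.sin θ))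
        = Real.exp (-θ + 3*(θ - Real.sin θ)) := (Real.exp_add _ _).symm
    have e3 : Real.exp (-2 + θ) ≤ Real.exp (-θ + 3*(θ - Real.sin θ)) :=
      Real.exp_le_exp.mpr (by linarith)
    have e4 : Real.exp (-2) * Real.exp θ ≤ Real.exp (-θ) * Real.exp (3*(θ - Real.sin θ)) := by
      rw [e1, e2]; exact e3
    have hp : 0 < Real.exp (-2) * Real.exp θ := by positivity
    nlinarith [mul_le_mul_of_nonneg_left e4 hM.le]
  have hcube : 6*(M*Real.exp (-2)/2*Real.exp θ)^3
      ≤ (M*Real.exp (-θ))^3*(Real.exp (3*(θ - Real.sin θ)))^2 := by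
    have p1 : (M*Real.exp (-2)/2*Real.exp θ)^3
        = M^3/8*(Real.exp (-2)^3 * Real.exp θ^3) := by ring
    have p2 : (M*Real.exp (-θ))^3*(Real.exp (3*(θ - Real.sin θ)))^2
        = M^3*(Real.exp (-θ)^3 * Real.exp (3*(θ - Real.sin θ))^2) := by ring
    have q1 : Real.exp (-2)^3 * Real.exp θ^3 = Real.exp (-6 + 3*θ) := by
      rw [← Real.exp_nat_mul, ← Real.exp_nat_mul, ← Real.exp_add]; norm_num
    have q2 : Real.exp (-θ)^3 * Real.exp (3*(θ - Real.sin θ))^2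
        = Real.exp (-(3*θ) + 2*(3*(θ - Real.sin θ))) := by
      rw [← Real.exp_nat_mul, ← Real.exp_nat_mul, ← Real.exp_add]; push_cast; ring_nf
    have q3 : Real.exp (-6 + 3*θ) ≤ Real.exp (-(3*θ) + 2*(3*(θ - Real.sin θ))) :=
      Real.exp_le_exp.mpr (by linarith)
    rw [p1, p2, q1, q2]
    nlinarith [Real.exp_pos (-6 + 3*θ), Real.exp_pos (-(3*θ) + 2*(3*(θ - Real.sin θ))),
      pow_pos hM 3]
  have hs2c : (Real.sin θ)^2 ≤ 2*(1 - Real.cos θ) := by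
    nlinarith [Real.sin_sq_add_cos_sq θ, Real.cos_le_one θ]
  exact core_abs _ _ _ _ _ _ (by positivity) (by nlinarith [Real.cos_le_one θ]) (by positivity)
    (Real.exp_pos _) rfl hqd hcube hs2c

/-- For every `M > 0` there exist `T* > 0` and a `C¹` function
`x : [0, T*) → (0, ∞)` with `x 0 = M`, satisfying
`x' t ≤ x t + (x t)^2 * exp (∫₀ᵗ x)` on `[0, T*)`, with
`limsup_{t → T*⁻} x t = ∞` and `liminf_{t → T*⁻} x t = 0`. -/
theorem oscillating_solution_exists' (M : ℝ) (hM : 0 < M) :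
    ∃ T : ℝ, 0 < T ∧ ∃ x : ℝ → ℝ,
      ContDiffOn ℝ 1 x (Set.Ico 0 T) ∧
      (∀ t ∈ Set.Ico (0:ℝ) T, 0 < x t) ∧
      x 0 = M ∧
      (∀ t ∈ Set.Ico (0:ℝ) T,
        derivWithin x (Set.Ico 0 T) t
          ≤ x t + (x t) ^ 2 * Real.exp (∫ s in (0:ℝ)..t, x s)) ∧
      Filter.limsup (fun t => (x t : EReal)) (nhdsWithin T (Set.Iio T)) = ⊤ ∧
      Filter.liminf (fun t => (x t : EReal)) (nhdsWithin T (Set.Iio T)) = 0 := by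
  classical
  set π := Real.pi with hπdef
  set k := M * Real.exp (-2) / 2 with hk
  have hk0 : 0 < k := by positivity
  set T := 1/k with hT
  have hT0 : 0 < T := by positivity
  set x : ℝ → ℝ := fun t => 3*k*(1-k*t)⁻¹*(1 - Real.cos (Real.log (1-k*t))) + M*(1-k*t)
    with hxdef
  have hupos : ∀ t ∈ Ico (0:ℝ) T, 0 < 1 - k*t := by
    intro t ht
    have h2 : k*t < 1 := by rw [mul_comm]; exact (lt_div_iff₀ hk0).mp ht.2
    linarith
  have hne : ∀ t ∈ Ico (0:ℝ) T, 1 - k*t ≠ 0 := fun t ht => (hupos t ht).ne'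
  -- positivity
  have hxpos : ∀ t ∈ Ico (0:ℝ) T, 0 < x t := by
    intro t ht
    have hu := hupos t ht
    have hc : Real.cos (Real.log (1-k*t)) ≤ 1 := Real.cos_le_one _
    have h1 : 0 ≤ 3*k*(1-k*t)⁻¹*(1 - Real.cos (Real.log (1-k*t))) := by
      apply mul_nonneg (by positivity)
      linarith
    have h2 : 0 < M*(1-k*t) := by positivity
    rw [hxdef]; simp only; linarith
  -- smoothness
  have hcd1 : ContDiffOn ℝ 1 (fun t : ℝ => 1 - k*t) (Ico (0:ℝ) T) :=
    (contDiff_const.sub (contDiff_const.mul contDiff_id)).contDiffOn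
  have hcd : ContDiffOn ℝ 1 x (Ico (0:ℝ) T) := by
    rw [hxdef]
    exact ((contDiffOn_const.mul (hcd1.inv hne)).mul
      (contDiffOn_const.sub (hcd1.log hne).cos)).add (contDiffOn_const.mul hcd1)
  -- pointwise derivative
  have hasD : ∀ t ∈ Ico (0:ℝ) T,
      HasDerivAt x
        (3*(k*(1-k*t)⁻¹)^2*((1 - Real.cos (Real.log (1-k*t)))
          + -Real.sin (Real.log (1-k*t))) - M*k) t := by
    intro t ht
    have hu := hupos t ht
    rw [hxdef]
    have h0 : HasDerivAt (fun s : ℝ => 1 - k*s) (-k) t := by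
      simpa using ((hasDerivAt_id t).const_mul k).const_sub 1
    have hinv := h0.inv hu.ne'
    have hlog := h0.log hu.ne'
    have h2 := hlog.cos.const_sub 1
    have h3 := hinv.const_mul (3*k)
    have h6 := (h3.mul h2).add (h0.const_mul M)
    refine h6.congr_deriv ?_
    simp only [Pi.inv_apply]
    field_simp
    ring
  -- integral formula
  have hint : ∀ t ∈ Ico (0:ℝ) T,
      (∫ s in (0:ℝ)..t, x s)
        = -3*Real.log (1-k*t) + 3*Real.sin (Real.log (1-k*t)) + M*(t - k*t^2/2) := by
    intro t ht
    have hFder : ∀ s ∈ Set.uIcc (0:ℝ) t,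
        HasDerivAt (fun r => -3*Real.log (1-k*r) + 3*Real.sin (Real.log (1-k*r))
            + M*(r - k*r^2/2)) (x s) s := by
      intro s hs
      rw [Set.uIcc_of_le ht.1] at hs
      have hu : 0 < 1 - k*s := by
        have h1 : 0 < 1 - k*t := hupos t ht
        have := hs.2
        nlinarith [hk0]
      have h0 : HasDerivAt (fun r : ℝ => 1 - k*r) (-k) s := by
        simpa using ((hasDerivAt_id s).const_mul k).const_sub 1
      have hlog := h0.log hu.ne'
      have hF1 := hlog.const_mul (-3)
      have hF2 := (hlog.sin).const_mul 3
      have hpoly : HasDerivAt (fun r : ℝ => r - k*r^2/2) (1 - k*(2*s^1)/2) s :=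
        (hasDerivAt_id s).sub (((hasDerivAt_pow 2 s).const_mul k).div_const 2)
      have h6 := (hF1.add hF2).add (hpoly.const_mul M)
      rw [hxdef]
      refine h6.congr_deriv ?_
      field_simp
      ring
    have hsub : Set.uIcc (0:ℝ) t ⊆ Ico (0:ℝ) T := by
      rw [Set.uIcc_of_le ht.1]
      exact fun r hr => ⟨hr.1, lt_of_le_of_lt hr.2 ht.2⟩
    have hii : IntervalIntegrable x MeasureTheory.volume 0 t :=
      (hcd.continuousOn.mono hsub).intervalIntegrable
    rw [intervalIntegral.integral_eq_sub_of_hasDerivAt hFder hii]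
    norm_num [Real.log_one]
  refine ⟨T, hT0, x, hcd, hxpos, ?_, ?_, ?_, ?_⟩
  · -- x 0 = M
    rw [hxdef]
    norm_num [Real.log_one]
  · -- derivative inequality
    intro t ht
    have hu := hupos t ht
    have hdw : derivWithin x (Ico (0:ℝ) T) t
        = 3*(k*(1-k*t)⁻¹)^2*((1 - Real.cos (Real.log (1-k*t)))
            + -Real.sin (Real.log (1-k*t))) - M*k :=
      ((hasD t ht).hasDerivWithinAt).derivWithin (uniqueDiffOn_Ico 0 T t ht)
    rw [hdw, hint t ht]
    have hθ0 : 0 ≤ -Real.log (1-k*t) := by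
      have : Real.log (1-k*t) ≤ 0 := Real.log_nonpos hu.le (by nlinarith [ht.1, hk0.le])
      linarith
    have key := core_theta M (-Real.log (1-k*t)) hM hθ0
    rw [show Real.exp (-Real.log (1-k*t)) = (1-k*t)⁻¹ by
          rw [Real.exp_neg, Real.exp_log hu],
        show Real.exp (-(-Real.log (1-k*t))) = 1-k*t by
          rw [neg_neg, Real.exp_log hu],
        Real.cos_neg, Real.sin_neg, ← hk] at key
    have hxeq : 3*(k*(1-k*t)⁻¹)*(1 - Real.cos (Real.log (1-k*t))) + M*(1-k*t) = x t := by
      rw [hxdef]; simp only; ring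
    rw [hxeq] at key
    have harg : 3*(-Real.log (1-k*t) - -Real.sin (Real.log (1-k*t)))
        ≤ -3*Real.log (1-k*t) + 3*Real.sin (Real.log (1-k*t)) + M*(t - k*t^2/2) := by
      have h1 : k*t ≤ 1 := by linarith
      have h2 : 0 ≤ t - k*t^2/2 := by nlinarith [ht.1]
      nlinarith [mul_nonneg hM.le h2]
    have h2 : (x t)^2 * Real.exp (3*(-Real.log (1-k*t) - -Real.sin (Real.log (1-k*t))))
        ≤ (x t)^2 * Real.exp (-3*Real.log (1-k*t) + 3*Real.sin (Real.log (1-k*t))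
            + M*(t - k*t^2/2)) :=
      mul_le_mul_of_nonneg_left (Real.exp_le_exp.mpr harg) (sq_nonneg _)
    have hMk : 0 < M*k := by positivity
    have hxt := hxpos t ht
    calc 3*(k*(1-k*t)⁻¹)^2*((1 - Real.cos (Real.log (1-k*t)))
          + -Real.sin (Real.log (1-k*t))) - M*k
        ≤ 3*(k*(1-k*t)⁻¹)^2*((1 - Real.cos (Real.log (1-k*t)))
          + -Real.sin (Real.log (1-k*t))) := by linarith
      _ ≤ x t ^ 2 * Real.exp (3*(-Real.log (1-k*t) - -Real.sin (Real.log (1-k*t)))) := key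
      _ ≤ x t ^ 2 * Real.exp (-3*Real.log (1-k*t) + 3*Real.sin (Real.log (1-k*t))
            + M*(t - k*t^2/2)) := h2
      _ ≤ x t + x t ^ 2 * Real.exp (-3*Real.log (1-k*t) + 3*Real.sin (Real.log (1-k*t))
            + M*(t - k*t^2/2)) := le_add_of_nonneg_left hxt.le
  · -- limsup = ⊤
    set φ : ℕ → ℝ := fun n => (1 - Real.exp (-(2*π*n + π)))/k with hφdef
    have hφu : ∀ n : ℕ, 1 - k * φ n = Real.exp (-(2*π*n + π)) := by
      intro n; rw [hφdef]; field_simp; ring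
    have hφlt : ∀ n : ℕ, φ n < T := by
      intro n
      have h1 : (0:ℝ) < Real.exp (-(2*π*n + π)) := Real.exp_pos _
      rw [hφdef, hT]
      apply div_lt_div_of_pos_right ?_ hk0
      linarith
    have hφx : ∀ n : ℕ, x (φ n) = 6*k*Real.exp (2*π*n + π) + M*Real.exp (-(2*π*n + π)) := by
      intro n
      rw [hxdef]
      simp only
      rw [hφu n, Real.log_exp]
      have hc : Real.cos (-(2*π*(n:ℝ) + π)) = -1 := by
        rw [Real.cos_neg]
        have h : 2*π*(n:ℝ) + π = (n:ℝ)*(2*π) + π := by ring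
        rw [h, hπdef, Real.cos_nat_mul_two_pi_add_pi]
      rw [hc, ← Real.exp_neg]
      ring_nf
    have hφtend : Tendsto φ atTop (nhdsWithin T (Set.Iio T)) := by
      apply tendsto_nhdsWithin_of_tendsto_nhds_of_eventually_within
      · have hexp : Tendsto (fun n : ℕ => Real.exp (-(2*π*n + π))) atTop (nhds 0) := by
          apply Real.tendsto_exp_atBot.comp
          apply Filter.tendsto_neg_atTop_atBot.comp
          apply tendsto_atTop_add_const_right
          exact Tendsto.const_mul_atTop (by positivity) tendsto_natCast_atTop_atTop
        have h : Tendsto (fun n : ℕ => (1 - Real.exp (-(2*π*n + π)))/k) atTop (nhds ((1-0)/k)) :=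
          (tendsto_const_nhds.sub hexp).div_const k
        simpa [hφdef, hT] using h
      · exact Filter.Eventually.of_forall fun n => hφlt n
    have hxtop : Tendsto (fun n => x (φ n)) atTop atTop := by
      apply tendsto_atTop_mono (f := fun n : ℕ => 12*π*k*n)
      · intro n
        rw [hφx n]
        have h1 := Real.add_one_le_exp (2*π*(n:ℝ) + π)
        have h2 : (0:ℝ) < Real.exp (-(2*π*(n:ℝ) + π)) := Real.exp_pos _
        nlinarith [Real.pi_pos, hk0, hM]
      · exact Tendsto.const_mul_atTop (by positivity) tendsto_natCast_atTop_atTop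
    haveI : (Filter.map φ atTop).NeBot := Filter.map_neBot
    have hg : Tendsto (fun t => (x t : EReal)) (Filter.map φ atTop) (nhds ⊤) := by
      rw [Filter.tendsto_map'_iff]
      rw [EReal.tendsto_nhds_top_iff_real]
      intro r
      filter_upwards [hxtop.eventually_gt_atTop r] with n hn
      exact EReal.coe_lt_coe_iff.mpr hn
    have h1 : Filter.limsup (fun t => (x t : EReal)) (Filter.map φ atTop) = ⊤ := hg.limsup_eq
    have h2 := Filter.limsup_le_limsup_of_le (hφtend : Filter.map φ atTop ≤ _)
      (u := fun t => (x t : EReal))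
    exact top_le_iff.mp (h1 ▸ h2)
  · -- liminf = 0
    set ψ : ℕ → ℝ := fun n => (1 - Real.exp (-(2*π*n)))/k with hψdef
    have hψu : ∀ n : ℕ, 1 - k * ψ n = Real.exp (-(2*π*n)) := by
      intro n; rw [hψdef]; field_simp; ring
    have hψlt : ∀ n : ℕ, ψ n < T := by
      intro n
      have h1 : (0:ℝ) < Real.exp (-(2*π*n)) := Real.exp_pos _
      rw [hψdef, hT]
      apply div_lt_div_of_pos_right ?_ hk0
      linarith
    have hψx : ∀ n : ℕ, x (ψ n) = M*Real.exp (-(2*π*n)) := by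
      intro n
      rw [hxdef]
      simp only
      rw [hψu n, Real.log_exp]
      have hc : Real.cos (-(2*π*(n:ℝ))) = 1 := by
        rw [Real.cos_neg]
        have h : 2*π*(n:ℝ) = (n:ℝ)*(2*π) := by ring
        rw [h, hπdef, Real.cos_nat_mul_two_pi]
      rw [hc]
      ring_nf
    have hexp : Tendsto (fun n : ℕ => Real.exp (-(2*π*n))) atTop (nhds 0) := by
      apply Real.tendsto_exp_atBot.comp
      apply Filter.tendsto_neg_atTop_atBot.comp
      exact Tendsto.const_mul_atTop (by positivity) tendsto_natCast_atTop_atTop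
    have hψtend : Tendsto ψ atTop (nhdsWithin T (Set.Iio T)) := by
      apply tendsto_nhdsWithin_of_tendsto_nhds_of_eventually_within
      · have h : Tendsto (fun n : ℕ => (1 - Real.exp (-(2*π*n)))/k) atTop (nhds ((1-0)/k)) :=
          (tendsto_const_nhds.sub hexp).div_const k
        simpa [hψdef, hT] using h
      · exact Filter.Eventually.of_forall fun n => hψlt n
    haveI : (Filter.map ψ atTop).NeBot := Filter.map_neBot
    have hg : Tendsto (fun t => (x t : EReal)) (Filter.map ψ atTop) (nhds 0) := by
      rw [Filter.tendsto_map'_iff]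
      have hreal : Tendsto (fun n => x (ψ n)) atTop (nhds 0) := by
        have h := hexp.const_mul M
        simp only [mul_zero] at h
        exact h.congr (fun n => (hψx n).symm)
      have h := (EReal.tendsto_coe (a := 0)).mpr hreal
      simpa [Function.comp_def] using h
    have h1 : Filter.liminf (fun t => (x t : EReal)) (Filter.map ψ atTop) = 0 := hg.liminf_eq
    have h2 := Filter.liminf_le_liminf_of_le (hψtend : Filter.map ψ atTop ≤ _)
      (u := fun t => (x t : EReal))
    have h3 : (0:EReal) ≤ Filter.liminf (fun t => (x t : EReal)) (nhdsWithin T (Set.Iio T)) := by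
      refine Filter.le_liminf_of_le (by isBoundedDefault) ?_
      filter_upwards [Ioo_mem_nhdsLT_of_mem (show T ∈ Set.Ioc 0 T from ⟨hT0, le_refl _⟩)]
        with t ht
      exact EReal.coe_nonneg.mpr (hxpos t ⟨ht.1.le, ht.2⟩).le
    exact le_antisymm (h1 ▸ h2) h3
end

section
/- Let M > 0 and let X : [0, ∞) → (0, ∞) be a C¹ function with X(0) = M satisfying X'(τ) ≤ 1 + X(τ)·e^τ for all τ ≥ 0, and suppose T* := ∫₀^∞ dτ / X(τ) < ∞. Define t(τ) = ∫₀^τ dτ' / X(τ'); then t is a C¹ diffeomorphism from [0, ∞) onto [0, T*) with inverse τ : [0, T*) → [0, ∞), and the function x := X ∘ τ : [0, T*) → (0, ∞) is C¹, satisfies x(0) = M, and satisfies x'(t) ≤ x(t) + x(t)² · exp(∫₀ᵗ x(s) ds) for all t ∈ [0, T*). -/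
open Set Filter MeasureTheory Topology

lemma inv_hasDerivWithinAt {f g : ℝ → ℝ} {s t : Set ℝ} {b f' : ℝ}
    (hgt : Set.MapsTo g t s) (hfg : ∀ y ∈ t, f (g y) = y)
    (hg : ContinuousWithinAt g t b) (hb : b ∈ t)
    (hf : HasDerivWithinAt f f' s (g b)) (hf' : f' ≠ 0) :
    HasDerivWithinAt g f'⁻¹ t b := by
  rw [hasDerivWithinAt_iff_tendsto_slope] at hf ⊢
  set a := g b with ha
  have hmaps : Set.MapsTo g (t \ {b}) (s \ {a}) := by
    intro y hy
    refine ⟨hgt hy.1, ?_⟩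
    simp only [mem_singleton_iff] at hy ⊢
    intro h
    apply hy.2
    rw [← hfg y hy.1, h, ha, hfg b hb]; exact rfl
  have hga : Tendsto g (𝓝[t \ {b}] b) (𝓝[s \ {a}] a) :=
    (hg.mono diff_subset).tendsto_nhdsWithin hmaps
  have h2 : Tendsto (fun y => (slope f a (g y))⁻¹) (𝓝[t \ {b}] b) (𝓝 f'⁻¹) :=
    (hf.comp hga).inv₀ hf'
  refine h2.congr' ?_
  filter_upwards [self_mem_nhdsWithin] with y hy
  rw [slope_def_field, slope_def_field, hfg y hy.1, ha, hfg b hb, inv_div]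

/-- If `X : [0, ∞) → (0, ∞)` is `C¹` with `X 0 = M`, satisfies
`X' τ ≤ 1 + X τ * e^τ`, and `T* = ∫₀^∞ dτ / X τ < ∞`, then
`t(τ) = ∫₀^τ dτ' / X τ'` is a `C¹` diffeomorphism from `[0, ∞)` onto `[0, T*)`
with inverse `τ`, and `x := X ∘ τ` is `C¹`, has `x 0 = M`, and satisfies
`x' t ≤ x t + (x t)^2 * exp (∫₀ᵗ x)` on `[0, T*)`. -/
theorem solution_transfer (M : ℝ) (hM : 0 < M) (X : ℝ → ℝ)
    (hX : ContDiffOn ℝ 1 X (Set.Ici 0))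
    (hXpos : ∀ τ ∈ Set.Ici (0:ℝ), 0 < X τ)
    (hX0 : X 0 = M)
    (hXineq : ∀ τ ∈ Set.Ici (0:ℝ),
      derivWithin X (Set.Ici 0) τ ≤ 1 + X τ * Real.exp τ)
    (hInt : MeasureTheory.IntegrableOn (fun τ => 1 / X τ) (Set.Ici 0))
    (T : ℝ) (hT : T = ∫ τ in Set.Ici (0:ℝ), 1 / X τ)
    (tfun : ℝ → ℝ) (htfun : ∀ τ : ℝ, tfun τ = ∫ s in (0:ℝ)..τ, 1 / X s) :
    0 < T ∧
    StrictMonoOn tfun (Set.Ici 0) ∧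
    ContDiffOn ℝ 1 tfun (Set.Ici 0) ∧
    tfun '' Set.Ici 0 = Set.Ico 0 T ∧
    ∃ τinv : ℝ → ℝ,
      (∀ τ ∈ Set.Ici (0:ℝ), τinv (tfun τ) = τ) ∧
      (∀ t ∈ Set.Ico (0:ℝ) T, τinv t ∈ Set.Ici (0:ℝ) ∧ tfun (τinv t) = t) ∧
      ContDiffOn ℝ 1 τinv (Set.Ico 0 T) ∧
      ContDiffOn ℝ 1 (X ∘ τinv) (Set.Ico 0 T) ∧
      (∀ t ∈ Set.Ico (0:ℝ) T, 0 < (X ∘ τinv) t) ∧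
      (X ∘ τinv) 0 = M ∧
      (∀ t ∈ Set.Ico (0:ℝ) T,
        derivWithin (X ∘ τinv) (Set.Ico 0 T) t
          ≤ (X ∘ τinv) t + ((X ∘ τinv) t) ^ 2
              * Real.exp (∫ s in (0:ℝ)..t, (X ∘ τinv) s)) := by
  have uD : UniqueDiffOn ℝ (Set.Ici (0:ℝ)) := uniqueDiffOn_Ici 0
  set f : ℝ → ℝ := fun τ => 1 / X τ with hfdef
  have hXc : ContinuousOn X (Ici 0) := hX.continuousOn
  have hXne : ∀ τ ∈ Ici (0:ℝ), X τ ≠ 0 := fun τ hτ => (hXpos τ hτ).ne'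
  have hfc : ContinuousOn f (Ici 0) := continuousOn_const.div hXc hXne
  have hfpos : ∀ τ ∈ Ici (0:ℝ), 0 < f τ := fun τ hτ => one_div_pos.2 (hXpos τ hτ)
  have huIcc : ∀ a b : ℝ, 0 ≤ a → 0 ≤ b → Set.uIcc a b ⊆ Ici 0 := by
    intro a b ha hb x hx
    rcases Set.mem_uIcc.1 hx with ⟨h1, _⟩ | ⟨h1, _⟩
    · exact le_trans ha h1
    · exact le_trans hb h1
  have hii : ∀ a b : ℝ, 0 ≤ a → 0 ≤ b → IntervalIntegrable f volume a b :=
    fun a b ha hb => (hInt.mono_set (huIcc a b ha hb)).intervalIntegrable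
  have htfun0 : tfun 0 = 0 := by rw [htfun]; exact intervalIntegral.integral_same
  have hsub : ∀ a ∈ Ici (0:ℝ), ∀ b ∈ Ici (0:ℝ), tfun b - tfun a = ∫ s in a..b, f s := by
    intro a ha b hb
    rw [htfun, htfun]
    exact intervalIntegral.integral_interval_sub_left (hii 0 b le_rfl hb) (hii 0 a le_rfl ha)
  have hpos_int : ∀ a b : ℝ, 0 ≤ a → a < b → 0 < ∫ s in a..b, f s := by
    intro a b ha hab
    exact intervalIntegral.intervalIntegral_pos_of_pos_on
      (hii a b ha (le_of_lt (lt_of_le_of_lt ha hab)))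
      (fun x hx => hfpos x (le_trans ha hx.1.le)) hab
  have hmono : StrictMonoOn tfun (Ici 0) := by
    intro a ha b hb hab
    have h1 := hpos_int a b ha hab
    have h2 := hsub a ha b hb
    linarith
  have hsub_le : ∀ s : Set ℝ, s ⊆ Ici 0 → (∫ x in s, f x) ≤ ∫ x in Ici (0:ℝ), f x := by
    intro s hs
    apply setIntegral_mono_set hInt
    · exact (ae_restrict_iff' measurableSet_Ici).2 (ae_of_all _ (fun x hx => (hfpos x hx).le))
    · exact hs.eventuallyLE
  have hTpos : 0 < T := by
    rw [hT]
    calc (0:ℝ) < ∫ s in (0:ℝ)..1, f s := hpos_int 0 1 le_rfl one_pos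
      _ = ∫ s in Set.Ioc (0:ℝ) 1, f s := intervalIntegral.integral_of_le zero_le_one
      _ ≤ _ := hsub_le _ (fun x hx => hx.1.le)
  have htnonneg : ∀ τ ∈ Ici (0:ℝ), 0 ≤ tfun τ := by
    intro τ hτ
    have h1 := hsub 0 self_mem_Ici τ hτ
    have h2 : 0 ≤ ∫ s in (0:ℝ)..τ, f s :=
      intervalIntegral.integral_nonneg hτ (fun u hu => (hfpos u hu.1).le)
    rw [htfun0] at h1
    linarith
  have htlt : ∀ τ ∈ Ici (0:ℝ), tfun τ < T := by
    intro τ hτ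
    have hIoisub : Set.Ioi τ ⊆ Ici (0:ℝ) := fun x hx => Set.mem_Ici.2 (le_trans hτ (le_of_lt hx))
    have hU : Set.Icc 0 τ ∪ Set.Ioi τ = Set.Ici (0:ℝ) := Set.Icc_union_Ioi_eq_Ici hτ
    have hd : Disjoint (Set.Icc (0:ℝ) τ) (Set.Ioi τ) :=
      Set.disjoint_left.2 (fun x hx hx' => absurd hx.2 (not_le.2 hx'))
    have hsplit := MeasureTheory.setIntegral_union hd measurableSet_Ioi
      (μ := volume) (f := f)
      (hInt.mono_set (hU ▸ Set.subset_union_left)) (hInt.mono_set hIoisub)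
    have heqT : T = (∫ s in Set.Icc (0:ℝ) τ, f s) + ∫ s in Set.Ioi τ, f s := by
      rw [hT, ← hU, hsplit]
    have hτeq : tfun τ = ∫ s in Set.Icc (0:ℝ) τ, f s := by
      rw [htfun, intervalIntegral.integral_of_le hτ, ← integral_Icc_eq_integral_Ioc]
    have hIoipos : 0 < ∫ s in Set.Ioi τ, f s := by
      have h1 : (0:ℝ) < ∫ s in τ..(τ+1), f s := hpos_int τ (τ+1) hτ (lt_add_one τ)
      have h2 : (∫ s in τ..(τ+1), f s) = ∫ s in Set.Ioc τ (τ+1), f s :=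
        intervalIntegral.integral_of_le (by linarith)
      have h3 : (∫ s in Set.Ioc τ (τ+1), f s) ≤ ∫ s in Set.Ioi τ, f s := by
        apply setIntegral_mono_set (hInt.mono_set hIoisub)
        · exact (ae_restrict_iff' measurableSet_Ioi).2
            (ae_of_all _ (fun x hx => (hfpos x (hIoisub hx)).le))
        · exact (Set.Ioc_subset_Ioi_self).eventuallyLE
      linarith
    rw [heqT, ← hτeq] at *
    linarith
  have hms : AEStronglyMeasurable f (volume.restrict (Ici 0)) := hInt.aestronglyMeasurable
  have htfun' : tfun = fun u => ∫ s in (0:ℝ)..u, f s := funext htfun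
  have hderiv : ∀ τ ∈ Ici (0:ℝ), HasDerivWithinAt tfun (f τ) (Ici 0) τ := by
    intro τ hτ
    rcases eq_or_lt_of_le (Set.mem_Ici.1 hτ) with h0 | h0
    · rw [htfun', ← h0]
      exact intervalIntegral.integral_hasDerivWithinAt_right (hii 0 0 le_rfl le_rfl)
        ⟨Ici 0, mem_of_superset self_mem_nhdsWithin Ioi_subset_Ici_self, hms⟩
        ((hfc 0 self_mem_Ici).mono Ioi_subset_Ici_self)
    · have hca : ContinuousAt f τ := (hfc τ hτ).continuousAt (Ici_mem_nhds h0)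
      have h := intervalIntegral.integral_hasDerivAt_right (hii 0 τ le_rfl hτ)
        ⟨Ici 0, Ici_mem_nhds h0, hms⟩ hca
      rw [htfun']
      exact h.hasDerivWithinAt
  have htCD : ContDiffOn ℝ 1 tfun (Ici 0) := by
    rw [show (1 : WithTop ℕ∞) = 0 + 1 by norm_num, contDiffOn_succ_iff_derivWithin uD]
    refine ⟨fun τ hτ => (hderiv τ hτ).differentiableWithinAt, by simp, ?_⟩
    rw [contDiffOn_zero]
    exact hfc.congr (fun τ hτ => (hderiv τ hτ).derivWithin (uD τ hτ))
  have htcont : ContinuousOn tfun (Ici 0) := htCD.continuousOn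
  have himg : tfun '' Ici 0 = Ico 0 T := by
    apply Subset.antisymm
    · rintro _ ⟨τ, hτ, rfl⟩; exact ⟨htnonneg τ hτ, htlt τ hτ⟩
    · rintro t ⟨ht0, htT⟩
      have htend : Tendsto tfun atTop (𝓝 T) := by
        have h1 : Tendsto (fun b => ∫ s in (0:ℝ)..b, f s) atTop
            (𝓝 (∫ s in Set.Ioi (0:ℝ), f s)) :=
          MeasureTheory.intervalIntegral_tendsto_integral_Ioi 0
            (hInt.mono_set Set.Ioi_subset_Ici_self) tendsto_id
        rw [htfun', hT, MeasureTheory.integral_Ici_eq_integral_Ioi]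
        exact h1
      have hev : ∀ᶠ b in atTop, t < tfun b := htend.eventually_const_lt htT
      obtain ⟨b, hb0, hbt⟩ : ∃ b, (0:ℝ) ≤ b ∧ t < tfun b := by
        obtain ⟨b, h1, h2⟩ := ((eventually_ge_atTop (0:ℝ)).and hev).exists
        exact ⟨b, h1, h2⟩
      have hIVT := intermediate_value_Icc hb0 (htcont.mono Set.Icc_subset_Ici_self)
      obtain ⟨τ, hτ, hτt⟩ := hIVT ⟨by rw [htfun0]; exact ht0, hbt.le⟩
      exact ⟨τ, Set.Icc_subset_Ici_self hτ, hτt⟩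
  have hexists : ∀ t ∈ Ico (0:ℝ) T, ∃ τ, 0 ≤ τ ∧ tfun τ = t := by
    intro t ht
    rw [← himg] at ht
    obtain ⟨τ, h1, h2⟩ := ht
    exact ⟨τ, h1, h2⟩
  choose! τinv hτmem htau using hexists
  have hmapsτ : MapsTo τinv (Ico 0 T) (Ici 0) := fun t ht => hτmem t ht
  have hleft : ∀ τ ∈ Ici (0:ℝ), τinv (tfun τ) = τ := by
    intro τ hτ
    have h1 : tfun τ ∈ Ico 0 T := ⟨htnonneg τ hτ, htlt τ hτ⟩
    exact hmono.injOn (hτmem _ h1) hτ (htau _ h1)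
  have hτinv0 : τinv 0 = 0 := by
    have := hleft 0 self_mem_Ici
    rwa [htfun0] at this
  have hτmonoOn : StrictMonoOn τinv (Ico 0 T) := by
    intro t1 h1 t2 h2 h12
    by_contra h
    push_neg at h
    have h' : tfun (τinv t2) ≤ tfun (τinv t1) :=
      hmono.monotoneOn (hτmem t2 h2) (hτmem t1 h1) h
    rw [htau t1 h1, htau t2 h2] at h'
    linarith
  have hτcont : ContinuousOn τinv (Ico 0 T) := by
    intro t ht
    have hR : ContinuousWithinAt τinv (Ici t) t := by
      apply hτmonoOn.continuousWithinAt_right_of_surjOn (mem_of_superset (Ico_mem_nhdsGE_of_mem ⟨le_rfl, ht.2⟩) (fun x hx => ⟨le_trans ht.1 hx.1, hx.2⟩))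
      intro τ hτ
      have hτ0 : (0:ℝ) ≤ τ := le_trans (hτmem t ht) (le_of_lt hτ)
      exact ⟨tfun τ, ⟨htnonneg τ hτ0, htlt τ hτ0⟩, hleft τ hτ0⟩
    rcases eq_or_lt_of_le ht.1 with h0 | h0
    · refine hR.mono ?_
      rw [← h0]
      exact fun x hx => hx.1
    · have hL : ContinuousWithinAt τinv (Iic t) t := by
        apply hτmonoOn.continuousWithinAt_left_of_exists_between
        · refine mem_of_superset (Ioc_mem_nhdsLE h0) ?_
          exact fun x hx => ⟨hx.1.le, lt_of_le_of_lt hx.2 ht.2⟩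
        · intro b hb
          have hτt_pos : 0 < τinv t := by
            rcases eq_or_lt_of_le (hτmem t ht) with he | hl
            · exfalso
              have h2 := htau t ht
              rw [← he, htfun0] at h2
              linarith
            · exact hl
          have hmax : max b 0 ∈ Ici (0:ℝ) := le_max_right b 0
          refine ⟨tfun (max b 0), ⟨htnonneg _ hmax, htlt _ hmax⟩, ?_⟩
          rw [hleft _ hmax]
          exact ⟨le_max_left b 0, max_lt hb hτt_pos⟩
      exact (hL.union hR).mono (by rw [Iic_union_Ici]; exact subset_univ _)
  have hτderiv : ∀ t ∈ Ico (0:ℝ) T, HasDerivWithinAt τinv (X (τinv t)) (Ico 0 T) t := by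
    intro t ht
    have h := inv_hasDerivWithinAt (f := tfun) (g := τinv) (s := Ici 0) (t := Ico 0 T)
      hmapsτ (fun y hy => htau y hy) (hτcont t ht) ht
      (hderiv (τinv t) (hτmem t ht)) (ne_of_gt (hfpos _ (hτmem t ht)))
    have heq : (f (τinv t))⁻¹ = X (τinv t) := by
      rw [hfdef]
      simp
    rwa [heq] at h
  have uDT : UniqueDiffOn ℝ (Ico (0:ℝ) T) := uniqueDiffOn_Ico 0 T
  have hτCD : ContDiffOn ℝ 1 τinv (Ico 0 T) := by
    rw [show (1 : WithTop ℕ∞) = 0 + 1 by norm_num, contDiffOn_succ_iff_derivWithin uDT]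
    refine ⟨fun t ht => (hτderiv t ht).differentiableWithinAt, by simp, ?_⟩
    rw [contDiffOn_zero]
    exact (hXc.comp hτcont hmapsτ).congr (fun t ht => (hτderiv t ht).derivWithin (uDT t ht))
  have hxCD : ContDiffOn ℝ 1 (X ∘ τinv) (Ico 0 T) := hX.comp hτCD hmapsτ
  have hxcont : ContinuousOn (X ∘ τinv) (Ico 0 T) := hXc.comp hτcont hmapsτ
  have hint_id : ∀ t ∈ Ico (0:ℝ) T, (∫ s in (0:ℝ)..t, (X ∘ τinv) s) = τinv t := by
    intro t ht
    have huIcc0t : Set.uIcc 0 t = Icc 0 t := uIcc_of_le ht.1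
    have hIccsub : Icc (0:ℝ) t ⊆ Ico 0 T := fun x hx => ⟨hx.1, lt_of_le_of_lt hx.2 ht.2⟩
    have h := intervalIntegral.integral_comp_smul_deriv'' (f := τinv) (f' := X ∘ τinv)
      (g := fun _ => (1:ℝ)) (a := 0) (b := t)
      (by rw [huIcc0t]; exact hτcont.mono hIccsub)
      (by
        intro x hx
        rw [min_eq_left ht.1, max_eq_right ht.1] at hx
        have hx' : x ∈ Ico 0 T := ⟨hx.1.le, lt_trans hx.2 ht.2⟩
        have hnh : Ico (0:ℝ) T ∈ 𝓝 x :=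
          mem_of_superset (isOpen_Ioo.mem_nhds ⟨hx.1, lt_trans hx.2 ht.2⟩) Ioo_subset_Ico_self
        exact (((hτderiv x hx').hasDerivAt hnh).hasDerivWithinAt))
      (by rw [huIcc0t]; exact hxcont.mono hIccsub)
      continuousOn_const
    simp only [smul_eq_mul, mul_one, Function.comp] at h
    rw [intervalIntegral.integral_const, hτinv0, smul_eq_mul, mul_one, sub_zero] at h
    simpa using h
  refine ⟨hTpos, hmono, htCD, himg, τinv, hleft,
    fun t ht => ⟨hτmem t ht, htau t ht⟩, hτCD, hxCD,
    fun t ht => hXpos _ (hτmem t ht), ?_, ?_⟩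
  · show X (τinv 0) = M
    rw [hτinv0, hX0]
  · intro t ht
    have hτ0 : τinv t ∈ Ici (0:ℝ) := hτmem t ht
    have hXd : HasDerivWithinAt X (derivWithin X (Ici 0) (τinv t)) (Ici 0) (τinv t) :=
      ((hX.differentiableOn one_ne_zero) (τinv t) hτ0).hasDerivWithinAt
    have hcomp : HasDerivWithinAt (X ∘ τinv)
        (derivWithin X (Ici 0) (τinv t) * X (τinv t)) (Ico 0 T) t :=
      hXd.comp t (hτderiv t ht) hmapsτ
    rw [hcomp.derivWithin (uDT t ht), hint_id t ht]
    have hineq := hXineq (τinv t) hτ0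
    have hXp := hXpos (τinv t) hτ0
    have hexp : 0 < Real.exp (τinv t) := Real.exp_pos (τinv t)
    simp only [Function.comp_apply]
    nlinarith [mul_le_mul_of_nonneg_right hineq hXp.le]
end

section
/- For every real number M > 0 there exists a C¹ function X : [0, ∞) → (0, ∞) such that: X(0) = M; X'(τ) ≤ 1 + X(τ)·e^τ for all τ ≥ 0; X(n) = M/(n+1) for every integer n ≥ 0; limsup_{τ → ∞} X(τ) = ∞; and ∫₀^∞ dτ / X(τ) < ∞. -/
open Set Filter MeasureTheory Real
open scoped ENNReal NNReal

noncomputable def Xfun (M : ℝ) (τ : ℝ) : ℝ :=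
  M / (τ + 1) + M / 5000000000 * (Real.sin (Real.pi * τ) ^ 2 * (τ + 1) ^ 8)

noncomputable def Dfun (M : ℝ) (τ : ℝ) : ℝ :=
  -(M / (τ + 1) ^ 2) + M / 5000000000 *
    (Real.pi * (2 * Real.sin (Real.pi * τ) * Real.cos (Real.pi * τ)) * (τ + 1) ^ 8
      + 8 * Real.sin (Real.pi * τ) ^ 2 * (τ + 1) ^ 7)

lemma Xfun_hasDerivAt (M : ℝ) {τ : ℝ} (hτ : (0:ℝ) ≤ τ) :
    HasDerivAt (Xfun M) (Dfun M τ) τ := by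
  have hne : τ + 1 ≠ 0 := by positivity
  have h1 : HasDerivAt (fun x : ℝ => x + 1) 1 τ := (hasDerivAt_id τ).add_const 1
  have h2 : HasDerivAt (fun x : ℝ => M / (x + 1))
      ((0 * (τ + 1) - M * 1) / (τ + 1) ^ 2) τ := (hasDerivAt_const τ M).div h1 hne
  have hlin : HasDerivAt (fun x : ℝ => Real.pi * x) (Real.pi * 1) τ :=
    (hasDerivAt_id τ).const_mul Real.pi
  have h3 : HasDerivAt (fun x : ℝ => Real.sin (Real.pi * x))
      (Real.cos (Real.pi * τ) * (Real.pi * 1)) τ :=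
    (Real.hasDerivAt_sin (Real.pi * τ)).comp τ hlin
  have h4 := h3.pow 2
  have h5 := h1.pow 8
  have h6 := (h4.mul h5).const_mul (M / 5000000000)
  have h7 := h2.add h6
  convert h7 using 1
  · rfl
  · rfl
  · rfl
  · simp only [Dfun, Pi.pow_apply]; push_cast; ring

lemma Xfun_pos {M : ℝ} (hM : 0 < M) {τ : ℝ} (hτ : (0:ℝ) ≤ τ) : 0 < Xfun M τ := by
  have h1 : 0 < M / (τ + 1) := by positivity
  have h2 : 0 ≤ M / 5000000000 * (Real.sin (Real.pi * τ) ^ 2 * (τ + 1) ^ 8) := by positivity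
  simp only [Xfun]; linarith

lemma Xfun_contDiffOn (M : ℝ) : ContDiffOn ℝ 1 (Xfun M) (Set.Ici 0) := by
  have hu : ContDiff ℝ 1 (fun τ : ℝ => τ + 1) := contDiff_id.add contDiff_const
  have hsin : ContDiff ℝ 1 (fun τ : ℝ => Real.sin (Real.pi * τ)) :=
    Real.contDiff_sin.comp (contDiff_const.mul contDiff_id)
  have hdiv : ContDiffOn ℝ 1 (fun τ : ℝ => M / (τ + 1)) (Set.Ici 0) :=
    ContDiffOn.div contDiffOn_const hu.contDiffOn
      (fun x hx => by have : (0:ℝ) ≤ x := hx; positivity)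
  exact hdiv.add (contDiff_const.mul ((hsin.pow 2).mul (hu.pow 8))).contDiffOn

lemma pow9_le (τ : ℝ) (hτ : 0 ≤ τ) : (τ + 1) ^ 9 ≤ 387420489 * Real.exp τ := by
  have h1 : τ / 9 + 1 ≤ Real.exp (τ / 9) := Real.add_one_le_exp _
  have h2 : (τ + 1) ^ 9 ≤ (9 * (τ / 9 + 1)) ^ 9 := by
    apply pow_le_pow_left₀ (by linarith) (by linarith)
  have h3 : (9 * (τ / 9 + 1) : ℝ) ^ 9 = 387420489 * (τ / 9 + 1) ^ 9 := by ring
  have h4 : (τ / 9 + 1) ^ 9 ≤ Real.exp (τ / 9) ^ 9 :=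
    pow_le_pow_left₀ (by positivity) h1 9
  have h5 : Real.exp (τ / 9) ^ 9 = Real.exp τ := by
    rw [← Real.exp_nat_mul]; norm_num [mul_div_cancel₀]
  nlinarith [Real.exp_pos τ]

lemma Dfun_le {M : ℝ} (hM : 0 < M) {τ : ℝ} (hτ : (0:ℝ) ≤ τ) :
    Dfun M τ ≤ 1 + Xfun M τ * Real.exp τ := by
  set s := Real.sin (Real.pi * τ)
  set co := Real.cos (Real.pi * τ)
  have hsc : s ^ 2 + co ^ 2 = 1 := Real.sin_sq_add_cos_sq _
  have h2sc : 2 * s * co ≤ 1 := by nlinarith [sq_nonneg (s - co)]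
  have hs2 : s ^ 2 ≤ 1 := by nlinarith [sq_nonneg co]
  have hu1 : (1:ℝ) ≤ τ + 1 := by linarith
  have hu8 : (0:ℝ) < (τ + 1) ^ 8 := by positivity
  have hu78 : (τ + 1) ^ 7 ≤ (τ + 1) ^ 8 := pow_le_pow_right₀ hu1 (by norm_num)
  have hπ : Real.pi ≤ 4 := Real.pi_le_four
  have hπ0 : 0 < Real.pi := Real.pi_pos
  have hD : Dfun M τ ≤ 12 * (M / 5000000000) * (τ + 1) ^ 8 := by
    simp only [Dfun]
    have e1 : Real.pi * (2 * s * co) * (τ + 1) ^ 8 ≤ 4 * (τ + 1) ^ 8 := by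
      have : Real.pi * (2 * s * co) ≤ 4 := by nlinarith
      nlinarith
    have e2 : 8 * s ^ 2 * (τ + 1) ^ 7 ≤ 8 * (τ + 1) ^ 8 := by nlinarith [pow_pos (show (0:ℝ) < τ+1 by linarith) 7]
    have e3 : 0 < M / (τ + 1) ^ 2 := by positivity
    have hM5 : 0 < M / 5000000000 := by positivity
    nlinarith
  have hkey : 12 * (M / 5000000000) * (τ + 1) ^ 8 ≤ M / (τ + 1) * Real.exp τ := by
    rw [div_mul_eq_mul_div, le_div_iff₀ (by linarith : (0:ℝ) < τ + 1)]
    have h9 := pow9_le τ hτ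
    have : 12 * (M / 5000000000) * (τ + 1) ^ 8 * (τ + 1) = 12 * (M / 5000000000) * (τ + 1) ^ 9 := by ring
    rw [this]
    calc 12 * (M / 5000000000) * (τ + 1) ^ 9 ≤ 12 * (M / 5000000000) * (387420489 * Real.exp τ) := by
          apply mul_le_mul_of_nonneg_left h9 (by positivity)
      _ ≤ M * Real.exp τ := by
          rw [show 12 * (M / 5000000000) * (387420489 * Real.exp τ)
              = (4649045868 / 5000000000) * (M * Real.exp τ) by ring]
          nlinarith [Real.exp_pos τ, mul_pos hM (Real.exp_pos τ)]
  have hX : M / (τ + 1) ≤ Xfun M τ := by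
    simp only [Xfun]; nlinarith [sq_nonneg s, hu8.le, (by positivity : (0:ℝ) ≤ M / 5000000000 * (s ^ 2 * (τ+1)^8))]
  have hexp : 0 < Real.exp τ := Real.exp_pos τ
  calc Dfun M τ ≤ 12 * (M / 5000000000) * (τ + 1) ^ 8 := hD
    _ ≤ M / (τ + 1) * Real.exp τ := hkey
    _ ≤ Xfun M τ * Real.exp τ := mul_le_mul_of_nonneg_right hX hexp.le
    _ ≤ 1 + Xfun M τ * Real.exp τ := by linarith

lemma Xfun_nat (M : ℝ) (n : ℕ) : Xfun M n = M / (n + 1) := by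
  simp only [Xfun]
  rw [mul_comm Real.pi (n:ℝ), Real.sin_nat_mul_pi]
  ring

lemma Xfun_half {M : ℝ} (hM : 0 < M) (n : ℕ) :
    M / 5000000000 * (n : ℝ) ≤ Xfun M ((n : ℝ) + 1 / 2) := by
  have hs : Real.sin (Real.pi * ((n : ℝ) + 1 / 2)) ^ 2 = 1 := by
    have : Real.pi * ((n : ℝ) + 1 / 2) = Real.pi / 2 + (n : ℝ) * Real.pi := by ring
    rw [this, Real.sin_add_nat_mul_pi, Real.sin_pi_div_two]
    rw [mul_pow, one_pow]
    rcases Nat.even_or_odd n with h | h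
    · rw [h.neg_one_pow]; norm_num
    · rw [h.neg_one_pow]; norm_num
  have h1 : (0:ℝ) < M / ((n : ℝ) + 1 / 2 + 1) := by positivity
  have h2 : (n : ℝ) ≤ ((n : ℝ) + 1 / 2 + 1) ^ 8 := by
    have hb : (n : ℝ) + 1 ≤ (n : ℝ) + 1 / 2 + 1 := by norm_num
    have h1n : (1:ℝ) ≤ (n:ℝ) + 1 := by have := Nat.cast_nonneg (α:=ℝ) n; linarith
    calc (n : ℝ) ≤ (n : ℝ) + 1 := by linarith
      _ ≤ ((n : ℝ) + 1) ^ 8 := le_self_pow₀ h1n (by norm_num)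
      _ ≤ ((n : ℝ) + 1 / 2 + 1) ^ 8 := by
          apply pow_le_pow_left₀ (by positivity) hb
  simp only [Xfun, hs, one_mul]
  have := mul_le_mul_of_nonneg_left h2 (le_of_lt (show (0:ℝ) < M / 5000000000 by positivity))
  linarith

lemma Xfun_limsup {M : ℝ} (hM : 0 < M) :
    Filter.limsup (fun τ => (Xfun M τ : EReal)) Filter.atTop = ⊤ := by
  rw [EReal.eq_top_iff_forall_lt]
  intro y
  refine lt_of_lt_of_le (show (y : EReal) < ((y + 1 : ℝ) : EReal) from
    EReal.coe_lt_coe_iff.mpr (by linarith)) ?_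
  apply Filter.le_limsup_of_frequently_le'
  rw [Filter.frequently_atTop]
  intro a
  obtain ⟨n, hn⟩ := exists_nat_ge (max a ((y + 1) * 5000000000 / M))
  refine ⟨(n : ℝ) + 1 / 2, ?_, ?_⟩
  · have := le_max_left a ((y + 1) * 5000000000 / M)
    have := le_trans this hn
    linarith
  · have h2 : (y + 1) * 5000000000 / M ≤ (n : ℝ) := le_trans (le_max_right _ _) hn
    have h3 : y + 1 ≤ M / 5000000000 * (n : ℝ) := by
      rw [div_le_iff₀ hM] at h2
      rw [div_mul_eq_mul_div, le_div_iff₀ (by norm_num : (0:ℝ) < 5000000000)]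
      linarith
    have h4 := le_trans h3 (Xfun_half hM n)
    exact_mod_cast EReal.coe_le_coe_iff.mpr h4

lemma Xfun_good_lower {M : ℝ} (hM : 0 < M) (n : ℕ) {τ : ℝ}
    (hτ : τ ∈ Set.Icc ((n:ℝ) + 1 / (2 * ((n:ℝ)+1)^3)) ((n:ℝ) + 1 - 1 / (2 * ((n:ℝ)+1)^3))) :
    M / 5000000000 * ((n:ℝ)+1)^2 ≤ Xfun M τ := by
  set δ : ℝ := 1 / (2 * ((n:ℝ)+1)^3) with hδ
  have hn1 : (1:ℝ) ≤ (n:ℝ) + 1 := by have := Nat.cast_nonneg (α:=ℝ) n; linarith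
  have hδ0 : 0 < δ := by positivity
  have hδhalf : δ ≤ 1 / 2 := by
    rw [hδ, div_le_div_iff₀ (by positivity) (by norm_num)]
    nlinarith [pow_le_pow_left₀ (by linarith : (0:ℝ) ≤ 1) hn1 3]
  obtain ⟨h1, h2⟩ := hτ
  set t : ℝ := τ - n with ht
  have htl : δ ≤ t := by rw [ht]; linarith
  have htu : t ≤ 1 - δ := by rw [ht]; linarith
  -- sin (π τ) ^ 2 = sin (π t) ^ 2
  have hsq : Real.sin (Real.pi * τ) ^ 2 = Real.sin (Real.pi * t) ^ 2 := by
    have : Real.pi * τ = Real.pi * t + (n:ℝ) * Real.pi := by rw [ht]; ring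
    rw [this, Real.sin_add_nat_mul_pi, mul_pow, ← pow_mul, mul_comm n 2, pow_mul]
    norm_num
  -- sin (π t) ≥ 2 δ
  have hsin : 2 * δ ≤ Real.sin (Real.pi * t) := by
    have hπ := Real.pi_pos
    have key : ∀ u : ℝ, δ ≤ u → u ≤ 1 / 2 → 2 * δ ≤ Real.sin (Real.pi * u) := by
      intro u hu1 hu2
      have h := Real.mul_le_sin (x := Real.pi * u) (by nlinarith) (by nlinarith)
      have : 2 / Real.pi * (Real.pi * u) = 2 * u := by field_simp
      rw [this] at h
      linarith
    rcases le_or_gt t (1 / 2) with h | h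
    · exact key t htl h
    · have : Real.sin (Real.pi * t) = Real.sin (Real.pi * (1 - t)) := by
        rw [show Real.pi * (1 - t) = Real.pi - Real.pi * t by ring, Real.sin_pi_sub]
      rw [this]
      exact key (1 - t) (by linarith) (by linarith)
  have hs2 : (1 / ((n:ℝ)+1)^3) ^ 2 ≤ Real.sin (Real.pi * τ) ^ 2 := by
    rw [hsq]
    have h2δ : 2 * δ = 1 / ((n:ℝ)+1)^3 := by rw [hδ]; field_simp
    calc (1 / ((n:ℝ)+1)^3) ^ 2 = (2 * δ) ^ 2 := by rw [h2δ]
      _ ≤ Real.sin (Real.pi * t) ^ 2 := by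
          apply pow_le_pow_left₀ (by positivity) hsin
  have hu8 : ((n:ℝ)+1)^8 ≤ (τ+1)^8 := by
    apply pow_le_pow_left₀ (by positivity) (by linarith)
  have hmain : M / 5000000000 * ((n:ℝ)+1)^2 ≤
      M / 5000000000 * (Real.sin (Real.pi * τ) ^ 2 * (τ+1)^8) := by
    have hM5 : (0:ℝ) < M / 5000000000 := by positivity
    apply mul_le_mul_of_nonneg_left _ hM5.le
    calc ((n:ℝ)+1)^2 = (1 / ((n:ℝ)+1)^3)^2 * ((n:ℝ)+1)^8 := by field_simp
      _ ≤ Real.sin (Real.pi * τ) ^ 2 * (τ+1)^8 := by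
          apply mul_le_mul hs2 hu8 (by positivity) (by positivity)
  have hpos : 0 < M / (τ + 1) := by
    have : (0:ℝ) ≤ τ := le_trans (by positivity) (le_trans h1 le_rfl)
    positivity
  simp only [Xfun]; linarith

lemma Xfun_continuousOn {M : ℝ} (hM : 0 < M) :
    ContinuousOn (fun τ => 1 / Xfun M τ) (Set.Ici 0) :=
  ContinuousOn.div continuousOn_const ((Xfun_contDiffOn M).continuousOn)
    (fun τ hτ => (Xfun_pos hM hτ).ne')

lemma Xfun_interval_bound {M : ℝ} (hM : 0 < M) (n : ℕ) :
    ∫⁻ τ in Set.Ico ((n:ℝ)) ((n:ℝ)+1), (‖1 / Xfun M τ‖₊ : ℝ≥0∞) ≤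
      ENNReal.ofReal ((2 / M + 5000000000 / M) * (1 / ((n:ℝ)+1)^2)) := by
  set δ : ℝ := 1 / (2 * ((n:ℝ)+1)^3) with hδ
  have hn0 : (0:ℝ) ≤ (n:ℝ) := Nat.cast_nonneg n
  have hn1 : (1:ℝ) ≤ (n:ℝ) + 1 := by linarith
  have hδ0 : 0 < δ := by positivity
  have hδhalf : δ ≤ 1 / 2 := by
    rw [hδ, div_le_div_iff₀ (by positivity) (by norm_num)]
    nlinarith [pow_le_pow_left₀ (by linarith : (0:ℝ) ≤ 1) hn1 3]
  -- pointwise bounds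
  have hbad : ∀ τ : ℝ, (n:ℝ) ≤ τ → τ ≤ (n:ℝ) + 1 →
      (‖1 / Xfun M τ‖₊ : ℝ≥0∞) ≤ ENNReal.ofReal (((n:ℝ)+2) / M) := by
    intro τ h1 h2
    have hτ0 : (0:ℝ) ≤ τ := le_trans hn0 h1
    have hXpos := Xfun_pos hM hτ0
    have hXlow : M / ((n:ℝ)+2) ≤ Xfun M τ := by
      have hfrac : M / (τ+1) ≥ M / ((n:ℝ)+2) := by
        apply div_le_div_of_nonneg_left hM.le (by linarith) (by linarith)
      have hrest : 0 ≤ M / 5000000000 * (Real.sin (Real.pi * τ) ^ 2 * (τ + 1) ^ 8) := by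
        positivity
      simp only [Xfun]; linarith
    rw [← enorm_eq_nnnorm, Real.enorm_eq_ofReal (by positivity)]
    apply ENNReal.ofReal_le_ofReal
    rw [div_le_div_iff₀ hXpos hM]
    have h0 : 0 < M / ((n:ℝ)+2) := by positivity
    calc 1 * M = M / ((n:ℝ)+2) * ((n:ℝ)+2) := by field_simp
      _ ≤ Xfun M τ * ((n:ℝ)+2) := by
          apply mul_le_mul_of_nonneg_right hXlow (by linarith)
      _ = ((n:ℝ)+2) * Xfun M τ := by ring
  have hgood : ∀ τ ∈ Set.Icc ((n:ℝ) + δ) ((n:ℝ) + 1 - δ),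
      (‖1 / Xfun M τ‖₊ : ℝ≥0∞) ≤ ENNReal.ofReal (5000000000 / (M * ((n:ℝ)+1)^2)) := by
    intro τ hτ
    have hXlow := Xfun_good_lower hM n hτ
    have hτ0 : (0:ℝ) ≤ τ := by
      have := hτ.1; have : (n:ℝ) + δ ≤ τ := hτ.1; linarith
    have hXpos := Xfun_pos hM hτ0
    rw [← enorm_eq_nnnorm, Real.enorm_eq_ofReal (by positivity)]
    apply ENNReal.ofReal_le_ofReal
    have hL : 0 < M / 5000000000 * ((n:ℝ)+1)^2 := by positivity
    rw [div_le_div_iff₀ hXpos (by positivity : (0:ℝ) < M * ((n:ℝ)+1)^2)]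
    calc 1 * (M * ((n:ℝ)+1)^2) = M / 5000000000 * ((n:ℝ)+1)^2 * 5000000000 := by ring
      _ ≤ Xfun M τ * 5000000000 := by
          apply mul_le_mul_of_nonneg_right hXlow (by norm_num)
      _ = 5000000000 * Xfun M τ := by ring
  -- cover
  have hcover : Set.Ico ((n:ℝ)) ((n:ℝ)+1) ⊆
      (Set.Ico ((n:ℝ)) ((n:ℝ)+δ) ∪ Set.Icc ((n:ℝ)+δ) ((n:ℝ)+1-δ)) ∪
        Set.Ioo ((n:ℝ)+1-δ) ((n:ℝ)+1) := by
    intro τ ⟨ha, hb⟩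
    by_cases h1 : τ < (n:ℝ) + δ
    · exact Or.inl (Or.inl ⟨ha, h1⟩)
    · by_cases h2 : τ ≤ (n:ℝ) + 1 - δ
      · exact Or.inl (Or.inr ⟨le_of_not_gt h1, h2⟩)
      · exact Or.inr ⟨lt_of_not_ge h2, hb⟩
  calc ∫⁻ τ in Set.Ico ((n:ℝ)) ((n:ℝ)+1), (‖1 / Xfun M τ‖₊ : ℝ≥0∞)
      ≤ ∫⁻ τ in (Set.Ico ((n:ℝ)) ((n:ℝ)+δ) ∪ Set.Icc ((n:ℝ)+δ) ((n:ℝ)+1-δ)) ∪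
        Set.Ioo ((n:ℝ)+1-δ) ((n:ℝ)+1), (‖1 / Xfun M τ‖₊ : ℝ≥0∞) :=
        lintegral_mono_set hcover
    _ ≤ (∫⁻ τ in Set.Ico ((n:ℝ)) ((n:ℝ)+δ), (‖1 / Xfun M τ‖₊ : ℝ≥0∞))
        + (∫⁻ τ in Set.Icc ((n:ℝ)+δ) ((n:ℝ)+1-δ), (‖1 / Xfun M τ‖₊ : ℝ≥0∞))
        + (∫⁻ τ in Set.Ioo ((n:ℝ)+1-δ) ((n:ℝ)+1), (‖1 / Xfun M τ‖₊ : ℝ≥0∞)) :=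
        le_trans (lintegral_union_le _ _ _) (by
          exact add_le_add_left (lintegral_union_le _ _ _) _)
    _ ≤ ENNReal.ofReal (((n:ℝ)+2) / M) * ENNReal.ofReal δ
        + ENNReal.ofReal (5000000000 / (M * ((n:ℝ)+1)^2)) * 1
        + ENNReal.ofReal (((n:ℝ)+2) / M) * ENNReal.ofReal δ := by
        gcongr
        · calc ∫⁻ τ in Set.Ico ((n:ℝ)) ((n:ℝ)+δ), (‖1 / Xfun M τ‖₊ : ℝ≥0∞)
              ≤ ∫⁻ _ in Set.Ico ((n:ℝ)) ((n:ℝ)+δ), ENNReal.ofReal (((n:ℝ)+2) / M) :=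
              setLIntegral_mono' measurableSet_Ico (fun τ hτ =>
                hbad τ hτ.1 (by have := hτ.2; linarith))
            _ = ENNReal.ofReal (((n:ℝ)+2) / M) * volume (Set.Ico ((n:ℝ)) ((n:ℝ)+δ)) :=
              setLIntegral_const _ _
            _ ≤ ENNReal.ofReal (((n:ℝ)+2) / M) * ENNReal.ofReal δ := by
              rw [Real.volume_Ico]
              gcongr
              linarith
        · calc ∫⁻ τ in Set.Icc ((n:ℝ)+δ) ((n:ℝ)+1-δ), (‖1 / Xfun M τ‖₊ : ℝ≥0∞)
              ≤ ∫⁻ _ in Set.Icc ((n:ℝ)+δ) ((n:ℝ)+1-δ),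
                  ENNReal.ofReal (5000000000 / (M * ((n:ℝ)+1)^2)) :=
              setLIntegral_mono' measurableSet_Icc hgood
            _ = ENNReal.ofReal (5000000000 / (M * ((n:ℝ)+1)^2))
                * volume (Set.Icc ((n:ℝ)+δ) ((n:ℝ)+1-δ)) := setLIntegral_const _ _
            _ ≤ ENNReal.ofReal (5000000000 / (M * ((n:ℝ)+1)^2)) * 1 := by
              gcongr
              rw [Real.volume_Icc]
              calc ENNReal.ofReal ((n:ℝ)+1-δ - ((n:ℝ)+δ)) ≤ ENNReal.ofReal 1 :=
                  ENNReal.ofReal_le_ofReal (by linarith)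
                _ = 1 := ENNReal.ofReal_one
        · calc ∫⁻ τ in Set.Ioo ((n:ℝ)+1-δ) ((n:ℝ)+1), (‖1 / Xfun M τ‖₊ : ℝ≥0∞)
              ≤ ∫⁻ _ in Set.Ioo ((n:ℝ)+1-δ) ((n:ℝ)+1), ENNReal.ofReal (((n:ℝ)+2) / M) :=
              setLIntegral_mono' measurableSet_Ioo (fun τ hτ =>
                hbad τ (by have := hτ.1; linarith) (by have := hτ.2; linarith))
            _ = ENNReal.ofReal (((n:ℝ)+2) / M) * volume (Set.Ioo ((n:ℝ)+1-δ) ((n:ℝ)+1)) :=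
              setLIntegral_const _ _
            _ ≤ ENNReal.ofReal (((n:ℝ)+2) / M) * ENNReal.ofReal δ := by
              rw [Real.volume_Ioo]
              gcongr
              linarith
    _ ≤ ENNReal.ofReal ((2 / M + 5000000000 / M) * (1 / ((n:ℝ)+1)^2)) := by
        rw [← ENNReal.ofReal_mul (by positivity), mul_one]
        rw [← ENNReal.ofReal_add (by positivity) (by positivity),
          ← ENNReal.ofReal_add (by positivity) (by positivity)]
        apply ENNReal.ofReal_le_ofReal
        have key : ((n:ℝ)+2) / M * δ ≤ 1 / (M * ((n:ℝ)+1)^2) := by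
          rw [hδ, div_mul_div_comm, div_le_div_iff₀ (by positivity) (by positivity)]
          ring_nf
          nlinarith [pow_pos (show (0:ℝ) < (n:ℝ)+1 by linarith) 2,
            pow_pos (show (0:ℝ) < (n:ℝ)+1 by linarith) 3,
            mul_pos hM (pow_pos (show (0:ℝ) < (n:ℝ)+1 by linarith) 5)]
        have e1 : (2 / M + 5000000000 / M) * (1 / ((n:ℝ)+1)^2)
            = 2 * (1 / (M * ((n:ℝ)+1)^2)) + 5000000000 / (M * ((n:ℝ)+1)^2) := by
          field_simp
        rw [e1]; linarith

lemma Xfun_integrableOn {M : ℝ} (hM : 0 < M) :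
    MeasureTheory.IntegrableOn (fun τ => 1 / Xfun M τ) (Set.Ici 0) := by
  constructor
  · exact (Xfun_continuousOn hM).aestronglyMeasurable measurableSet_Ici
  · rw [hasFiniteIntegral_def]
    have hsub : Set.Ici (0:ℝ) ⊆ ⋃ n : ℕ, Set.Ico ((n:ℝ)) ((n:ℝ)+1) := by
      intro x hx
      refine Set.mem_iUnion.mpr ⟨⌊x⌋₊, ?_, ?_⟩
      · exact Nat.floor_le hx
      · exact Nat.lt_floor_add_one x
    calc ∫⁻ τ in Set.Ici (0:ℝ), (‖1 / Xfun M τ‖₊ : ℝ≥0∞)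
        ≤ ∫⁻ τ in ⋃ n : ℕ, Set.Ico ((n:ℝ)) ((n:ℝ)+1), (‖1 / Xfun M τ‖₊ : ℝ≥0∞) :=
          lintegral_mono_set hsub
      _ ≤ ∑' n : ℕ, ∫⁻ τ in Set.Ico ((n:ℝ)) ((n:ℝ)+1), (‖1 / Xfun M τ‖₊ : ℝ≥0∞) :=
          lintegral_iUnion_le _ _
      _ ≤ ∑' n : ℕ, ENNReal.ofReal ((2 / M + 5000000000 / M) * (1 / ((n:ℝ)+1)^2)) :=
          ENNReal.tsum_le_tsum (fun n => Xfun_interval_bound hM n)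
      _ < ⊤ := by
          have hsum : Summable (fun n : ℕ => (2 / M + 5000000000 / M) * (1 / ((n:ℝ)+1)^2)) := by
            apply Summable.mul_left
            have h1 : Summable (fun n : ℕ => 1 / ((n:ℝ))^2) :=
              Real.summable_one_div_nat_pow.mpr (by norm_num)
            have h2 := (summable_nat_add_iff 1).mpr h1
            apply h2.congr
            intro n; push_cast; ring
          rw [← ENNReal.ofReal_tsum_of_nonneg (fun n => by positivity) hsum]
          exact ENNReal.ofReal_lt_top

/-- For every `M > 0` there is a `C¹` function `X : [0, ∞) → (0, ∞)` with
`X 0 = M`, satisfying `X' τ ≤ 1 + X τ * e^τ` for all `τ ≥ 0`,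
`X n = M / (n + 1)` for every `n : ℕ`, `limsup_{τ → ∞} X τ = ∞`, and
`∫₀^∞ dτ / X τ < ∞`. -/
theorem oscillating_profile_exists (M : ℝ) (hM : 0 < M) :
    ∃ X : ℝ → ℝ,
      ContDiffOn ℝ 1 X (Set.Ici 0) ∧
      (∀ τ ∈ Set.Ici (0:ℝ), 0 < X τ) ∧
      X 0 = M ∧
      (∀ τ ∈ Set.Ici (0:ℝ),
        derivWithin X (Set.Ici 0) τ ≤ 1 + X τ * Real.exp τ) ∧
      (∀ n : ℕ, X n = M / (n + 1)) ∧
      Filter.limsup (fun τ => (X τ : EReal)) Filter.atTop = ⊤ ∧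
      MeasureTheory.IntegrableOn (fun τ => 1 / X τ) (Set.Ici 0) := by
  refine ⟨Xfun M, Xfun_contDiffOn M, fun τ hτ => Xfun_pos hM hτ, ?_, ?_, Xfun_nat M,
    Xfun_limsup hM, Xfun_integrableOn hM⟩
  · have := Xfun_nat M 0
    simpa using this
  · intro τ hτ
    have hd := Xfun_hasDerivAt M (hτ : (0:ℝ) ≤ τ)
    rw [hd.hasDerivWithinAt.derivWithin (uniqueDiffOn_Ici 0 τ hτ)]
    exact Dfun_le hM hτ
end

section
/- Let Y : [0, ∞) → (0, ∞) be a measurable function such that for every integer n ≥ 0: Y(τ) ≥ e^{τ/2} − e^{n/2} + 1/(n+1) for all τ ∈ [n, n+1 − 2^{−n−1}), and Y(τ) ≥ 1/(n+1) for all τ ∈ [n+1 − 2^{−n−1}, n+1). Then ∫₀^∞ dτ / Y(τ) < ∞. -/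
open Set Filter MeasureTheory

/-- If `Y : [0, ∞) → (0, ∞)` is measurable and, for each `n : ℕ`, satisfies
`Y τ ≥ e^{τ/2} - e^{n/2} + 1/(n+1)` on `[n, n+1 - 2^{-n-1})` and
`Y τ ≥ 1/(n+1)` on `[n+1 - 2^{-n-1}, n+1)`, then `∫₀^∞ dτ / Y τ < ∞`. -/
theorem reciprocal_integrable (Y : ℝ → ℝ)
    (hmeas : Measurable Y)
    (hpos : ∀ τ ∈ Set.Ici (0:ℝ), 0 < Y τ)
    (hbound1 : ∀ n : ℕ, ∀ τ ∈ Set.Ico (n : ℝ) ((n : ℝ) + 1 - ((2:ℝ) ^ (n + 1))⁻¹),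
      Real.exp (τ / 2) - Real.exp ((n : ℝ) / 2) + 1 / ((n : ℝ) + 1) ≤ Y τ)
    (hbound2 : ∀ n : ℕ,
      ∀ τ ∈ Set.Ico ((n : ℝ) + 1 - ((2:ℝ) ^ (n + 1))⁻¹) ((n : ℝ) + 1),
      1 / ((n : ℝ) + 1) ≤ Y τ) :
    MeasureTheory.IntegrableOn (fun τ => 1 / Y τ) (Set.Ici 0) := by
  -- abbreviations
  set u : ℕ → ℝ := fun n => ((n:ℝ)+3) * Real.exp (-(n:ℝ)/4) + ((n:ℝ)+1) * ((2:ℝ)^(n+1))⁻¹ with hu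
  -- lower bound 1/(n+1) ≤ Y on [n, n+1)
  have hYlow : ∀ n : ℕ, ∀ τ ∈ Set.Ico (n:ℝ) ((n:ℝ)+1), 1/((n:ℝ)+1) ≤ Y τ := by
    intro n τ hτ
    obtain ⟨h1, h2⟩ := hτ
    by_cases hc : τ < (n:ℝ)+1 - ((2:ℝ)^(n+1))⁻¹
    · have hb := hbound1 n τ ⟨h1, hc⟩
      have hexp : Real.exp ((n:ℝ)/2) ≤ Real.exp (τ/2) := Real.exp_le_exp.2 (by linarith)
      linarith
    · exact hbound2 n τ ⟨not_lt.1 hc, h2⟩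
  -- norm bound on [n, n+1)
  have hnorm1 : ∀ n : ℕ, ∀ τ ∈ Set.Ico (n:ℝ) ((n:ℝ)+1), ‖1 / Y τ‖ ≤ (n:ℝ)+1 := by
    intro n τ hτ
    have hY := hYlow n τ hτ
    have hp : (0:ℝ) < 1/((n:ℝ)+1) := by positivity
    have hYpos : 0 < Y τ := lt_of_lt_of_le hp hY
    rw [Real.norm_eq_abs, abs_of_pos (by positivity)]
    have := one_div_le_one_div_of_le hp hY
    rwa [one_div_one_div] at this
  -- norm bound on the middle region
  have hnorm2 : ∀ n : ℕ, ∀ τ ∈ Set.Ico ((n:ℝ) + Real.exp (-(n:ℝ)/4)) ((n:ℝ)+1 - ((2:ℝ)^(n+1))⁻¹),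
      ‖1 / Y τ‖ ≤ 2 * Real.exp (-(n:ℝ)/4) := by
    intro n τ hτ
    obtain ⟨h1, h2⟩ := hτ
    have hδpos : 0 < Real.exp (-(n:ℝ)/4) := Real.exp_pos _
    have hb := hbound1 n τ ⟨by linarith, h2⟩
    have e1 : Real.exp (τ/2) = Real.exp ((n:ℝ)/2) * Real.exp ((τ-(n:ℝ))/2) := by
      rw [← Real.exp_add]; ring_nf
    have e2 : (τ-(n:ℝ))/2 + 1 ≤ Real.exp ((τ-(n:ℝ))/2) := Real.add_one_le_exp _
    have e3 : Real.exp ((n:ℝ)/2) * Real.exp (-(n:ℝ)/4) = Real.exp ((n:ℝ)/4) := by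
      rw [← Real.exp_add]; ring_nf
    have hinvpos : (0:ℝ) < 1/((n:ℝ)+1) := by positivity
    have key : Real.exp ((n:ℝ)/4) / 2 ≤ Y τ := by
      nlinarith [Real.exp_pos ((n:ℝ)/2)]
    have hqpos : (0:ℝ) < Real.exp ((n:ℝ)/4) / 2 := by positivity
    have hYpos : 0 < Y τ := lt_of_lt_of_le hqpos key
    rw [Real.norm_eq_abs, abs_of_pos (by positivity)]
    have h4 := one_div_le_one_div_of_le hqpos key
    have h5 : 1 / (Real.exp ((n:ℝ)/4) / 2) = 2 * Real.exp (-(n:ℝ)/4) := by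
      rw [show -(n:ℝ)/4 = -((n:ℝ)/4) by ring, Real.exp_neg]
      field_simp
    linarith [h4, h5.le, h5.ge]
  constructor
  · exact (measurable_const.div hmeas).aestronglyMeasurable
  rw [hasFiniteIntegral_iff_norm]
  have hunion : Set.Ici (0:ℝ) = ⋃ n : ℕ, Set.Ico (n:ℝ) ((n:ℝ)+1) := by
    ext τ
    simp only [Set.mem_Ici, Set.mem_iUnion, Set.mem_Ico]
    constructor
    · intro h
      exact ⟨⌊τ⌋₊, Nat.floor_le h, Nat.lt_floor_add_one τ⟩
    · rintro ⟨n, h1, _⟩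
      exact le_trans (by positivity) h1
  have hdisj : Pairwise (Function.onFun Disjoint fun n : ℕ => Set.Ico (n:ℝ) ((n:ℝ)+1)) := by
    intro m n hmn
    simp only [Function.onFun]
    rw [Set.Ico_disjoint_Ico]
    rcases hmn.lt_or_gt with h | h
    · have hmn' : (m:ℝ) + 1 ≤ (n:ℝ) := by exact_mod_cast Nat.succ_le_of_lt h
      calc min ((m:ℝ)+1) ((n:ℝ)+1) ≤ (m:ℝ)+1 := min_le_left _ _
        _ ≤ (n:ℝ) := hmn'
        _ ≤ max (m:ℝ) (n:ℝ) := le_max_right _ _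
    · have hmn' : (n:ℝ) + 1 ≤ (m:ℝ) := by exact_mod_cast Nat.succ_le_of_lt h
      calc min ((m:ℝ)+1) ((n:ℝ)+1) ≤ (n:ℝ)+1 := min_le_right _ _
        _ ≤ (m:ℝ) := hmn'
        _ ≤ max (m:ℝ) (n:ℝ) := le_max_left _ _
  rw [hunion, lintegral_iUnion (fun n => measurableSet_Ico) hdisj]
  -- per-interval bound
  have hterm : ∀ n : ℕ, ∫⁻ τ in Set.Ico (n:ℝ) ((n:ℝ)+1), ENNReal.ofReal ‖1 / Y τ‖ ≤
      ENNReal.ofReal (u n) := by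
    intro n
    set δ : ℝ := Real.exp (-(n:ℝ)/4) with hδ
    set ε : ℝ := ((2:ℝ)^(n+1))⁻¹ with hε
    have hδpos : 0 < δ := Real.exp_pos _
    have hδle : δ ≤ 1 := by
      rw [hδ]
      refine Real.exp_le_one_iff.2 ?_
      have : (0:ℝ) ≤ (n:ℝ) := Nat.cast_nonneg n
      linarith
    have hεpos : 0 < ε := by positivity
    have hεle : ε ≤ 1/2 := by
      rw [hε]
      rw [inv_le_comm₀ (by positivity) (by norm_num)]
      calc (1/2 : ℝ)⁻¹ = 2 := by norm_num
        _ ≤ 2^(n+1) := by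
          calc (2:ℝ) = 2^1 := (pow_one 2).symm
            _ ≤ 2^(n+1) := pow_le_pow_right₀ (by norm_num) (by omega)
    have hcover : Set.Ico (n:ℝ) ((n:ℝ)+1) ⊆
        (Set.Ico (n:ℝ) ((n:ℝ)+δ) ∪ Set.Ico ((n:ℝ)+δ) ((n:ℝ)+1-ε)) ∪
          Set.Ico ((n:ℝ)+1-ε) ((n:ℝ)+1) := by
      intro τ hτ
      obtain ⟨h1, h2⟩ := hτ
      by_cases hc1 : τ < (n:ℝ)+δ
      · exact Or.inl (Or.inl ⟨h1, hc1⟩)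
      · by_cases hc2 : τ < (n:ℝ)+1-ε
        · exact Or.inl (Or.inr ⟨not_lt.1 hc1, hc2⟩)
        · exact Or.inr ⟨not_lt.1 hc2, h2⟩
    calc ∫⁻ τ in Set.Ico (n:ℝ) ((n:ℝ)+1), ENNReal.ofReal ‖1 / Y τ‖
        ≤ ∫⁻ τ in (Set.Ico (n:ℝ) ((n:ℝ)+δ) ∪ Set.Ico ((n:ℝ)+δ) ((n:ℝ)+1-ε)) ∪
            Set.Ico ((n:ℝ)+1-ε) ((n:ℝ)+1), ENNReal.ofReal ‖1 / Y τ‖ :=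
          lintegral_mono_set hcover
      _ ≤ (∫⁻ τ in Set.Ico (n:ℝ) ((n:ℝ)+δ), ENNReal.ofReal ‖1 / Y τ‖) +
            (∫⁻ τ in Set.Ico ((n:ℝ)+δ) ((n:ℝ)+1-ε), ENNReal.ofReal ‖1 / Y τ‖) +
            (∫⁻ τ in Set.Ico ((n:ℝ)+1-ε) ((n:ℝ)+1), ENNReal.ofReal ‖1 / Y τ‖) := by
          refine le_trans (lintegral_union_le _ _ _) ?_
          exact add_le_add_left (lintegral_union_le _ _ _) _
      _ ≤ ENNReal.ofReal (((n:ℝ)+1) * δ) + ENNReal.ofReal (2 * δ) +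
            ENNReal.ofReal (((n:ℝ)+1) * ε) := by
          gcongr
          · -- first piece
            calc ∫⁻ τ in Set.Ico (n:ℝ) ((n:ℝ)+δ), ENNReal.ofReal ‖1 / Y τ‖
                ≤ ∫⁻ _ in Set.Ico (n:ℝ) ((n:ℝ)+δ), ENNReal.ofReal ((n:ℝ)+1) := by
                  refine setLIntegral_mono measurable_const ?_
                  intro τ hτ
                  refine ENNReal.ofReal_le_ofReal (hnorm1 n τ ⟨hτ.1, ?_⟩)
                  linarith [hτ.2]
              _ = ENNReal.ofReal ((n:ℝ)+1) * volume (Set.Ico (n:ℝ) ((n:ℝ)+δ)) :=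
                  setLIntegral_const _ _
              _ = ENNReal.ofReal (((n:ℝ)+1) * δ) := by
                  rw [Real.volume_Ico, ← ENNReal.ofReal_mul (by positivity)]
                  ring_nf
          · -- middle piece
            calc ∫⁻ τ in Set.Ico ((n:ℝ)+δ) ((n:ℝ)+1-ε), ENNReal.ofReal ‖1 / Y τ‖
                ≤ ∫⁻ _ in Set.Ico ((n:ℝ)+δ) ((n:ℝ)+1-ε), ENNReal.ofReal (2*δ) := by
                  refine setLIntegral_mono measurable_const ?_
                  intro τ hτ
                  exact ENNReal.ofReal_le_ofReal (hnorm2 n τ hτ)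
              _ = ENNReal.ofReal (2*δ) * volume (Set.Ico ((n:ℝ)+δ) ((n:ℝ)+1-ε)) :=
                  setLIntegral_const _ _
              _ ≤ ENNReal.ofReal (2*δ) * 1 := by
                  gcongr
                  rw [Real.volume_Ico]
                  exact ENNReal.ofReal_le_one.2 (by linarith)
              _ = ENNReal.ofReal (2*δ) := mul_one _
          · -- last piece
            calc ∫⁻ τ in Set.Ico ((n:ℝ)+1-ε) ((n:ℝ)+1), ENNReal.ofReal ‖1 / Y τ‖
                ≤ ∫⁻ _ in Set.Ico ((n:ℝ)+1-ε) ((n:ℝ)+1), ENNReal.ofReal ((n:ℝ)+1) := by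
                  refine setLIntegral_mono measurable_const ?_
                  intro τ hτ
                  refine ENNReal.ofReal_le_ofReal (hnorm1 n τ ⟨?_, hτ.2⟩)
                  linarith [hτ.1]
              _ = ENNReal.ofReal ((n:ℝ)+1) * volume (Set.Ico ((n:ℝ)+1-ε) ((n:ℝ)+1)) :=
                  setLIntegral_const _ _
              _ = ENNReal.ofReal (((n:ℝ)+1) * ε) := by
                  rw [Real.volume_Ico, ← ENNReal.ofReal_mul (by positivity)]
                  ring_nf
      _ = ENNReal.ofReal (u n) := by
          rw [← ENNReal.ofReal_add (by positivity) (by positivity),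
            ← ENNReal.ofReal_add (by positivity) (by positivity)]
          congr 1
          rw [hu]
          ring
  -- summability of u
  have hr1 : Real.exp (-(1:ℝ)/4) < 1 := by
    rw [Real.exp_lt_one_iff]; norm_num
  have hr1' : (0:ℝ) ≤ Real.exp (-(1:ℝ)/4) := (Real.exp_pos _).le
  have hsumu : Summable u := by
    have ha : Summable (fun n : ℕ => ((n:ℝ)+3) * (Real.exp (-(1:ℝ)/4))^n) := by
      have h1 := summable_pow_mul_geometric_of_norm_lt_one (R := ℝ) 1
        (r := Real.exp (-(1:ℝ)/4)) (by rwa [Real.norm_eq_abs, abs_of_nonneg hr1'])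
      have h2 := (summable_geometric_of_lt_one hr1' hr1).mul_left 3
      exact (h1.add h2).congr (fun n => by push_cast; ring)
    have hb : Summable (fun n : ℕ => ((n:ℝ)+1) * ((2:ℝ)^(n+1))⁻¹) := by
      have h1 := summable_pow_mul_geometric_of_norm_lt_one (R := ℝ) 1
        (r := (1/2:ℝ)) (by rw [Real.norm_eq_abs, abs_of_pos] <;> norm_num)
      have h2 := summable_geometric_of_lt_one (by norm_num : (0:ℝ) ≤ 1/2) (by norm_num)
      refine (((h1.add h2).mul_right (1/2)).congr (fun n => ?_))
      have : ((2:ℝ)^(n+1))⁻¹ = (1/2:ℝ)^n * (1/2) := by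
        rw [pow_succ, mul_inv]
        congr 1
        · rw [← inv_pow]; norm_num
        · norm_num
      rw [this]; push_cast; ring
    have heq : ∀ n : ℕ, ((n:ℝ)+3) * (Real.exp (-(1:ℝ)/4))^n = ((n:ℝ)+3) * Real.exp (-(n:ℝ)/4) := by
      intro n
      congr 1
      rw [← Real.exp_nat_mul]
      ring_nf
    exact ((ha.congr heq).add hb)
  have hnonneg : ∀ n, 0 ≤ u n := by
    intro n
    have := (Real.exp_pos (-(n:ℝ)/4)).le
    have : (0:ℝ) ≤ ((2:ℝ)^(n+1))⁻¹ := by positivity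
    rw [hu]
    positivity
  calc ∑' n : ℕ, ∫⁻ τ in Set.Ico (n:ℝ) ((n:ℝ)+1), ENNReal.ofReal ‖1 / Y τ‖
      ≤ ∑' n : ℕ, ENNReal.ofReal (u n) := ENNReal.tsum_le_tsum hterm
    _ = ENNReal.ofReal (∑' n, u n) := (ENNReal.ofReal_tsum_of_nonneg hnonneg hsumu).symm
    _ < ⊤ := ENNReal.ofReal_lt_top
end

section
/- Let α > 0, A > 0, B ≥ 0, T* > 0, and let f : [0, T*) → [0, ∞) be differentiable with f'(t) ≤ A·(B + f(t))^{1+α} for all t ∈ [0, T*). If limsup_{t → T*⁻} f(t) = ∞, then for every t ∈ [0, T*) one has B + f(t) ≥ (α·A·(T* − t))^{−1/α}, i.e., f(t) ≥ (α·A·(T* − t))^{−1/α} − B. -/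
open Set Filter MeasureTheory

/-- Riccati-type comparison lemma: if `f : [0, T*) → [0, ∞)` is differentiable
with `f' t ≤ A * (B + f t)^(1+α)` and `limsup_{t → T*⁻} f t = ∞`, then for all
`t ∈ [0, T*)` one has `B + f t ≥ (α A (T* - t))^{-1/α}`, i.e.
`f t ≥ (α A (T* - t))^{-1/α} - B`. -/
theorem riccati_blowup_lower_bound (α A B T : ℝ)
    (hα : 0 < α) (hA : 0 < A) (hB : 0 ≤ B) (hT : 0 < T)
    (f f' : ℝ → ℝ)
    (hf_nonneg : ∀ t ∈ Set.Ico (0:ℝ) T, 0 ≤ f t)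
    (hderiv : ∀ t ∈ Set.Ico (0:ℝ) T, HasDerivWithinAt f (f' t) (Set.Ico 0 T) t)
    (hineq : ∀ t ∈ Set.Ico (0:ℝ) T, f' t ≤ A * (B + f t) ^ (1 + α))
    (hblow : Filter.limsup (fun t => (f t : EReal)) (nhdsWithin T (Set.Iio T)) = ⊤) :
    ∀ t ∈ Set.Ico (0:ℝ) T,
      (α * A * (T - t)) ^ (-(1 / α)) ≤ B + f t ∧
      (α * A * (T - t)) ^ (-(1 / α)) - B ≤ f t := by
  intro t ht
  have hmul : (-α) * (-(1 / α)) = 1 := by field_simp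
  have key : ∀ ε > (0:ℝ), (α * A * (T - t)) ^ (-(1 / α)) ≤ B + ε + f t := by
    intro ε hε
    set c : ℝ → ℝ := fun s => B + ε + f s with hc
    have hcpos : ∀ s ∈ Set.Ico (0:ℝ) T, 0 < c s := by
      intro s hs
      have := hf_nonneg s hs
      simp only [hc]
      linarith
    set g : ℝ → ℝ := fun s => c s ^ (-α) with hg
    set h : ℝ → ℝ := fun s => g s + α * A * s with hh
    set h' : ℝ → ℝ := fun s => -α * c s ^ (-α - 1) * f' s + α * A * 1 with hh'
    have hDh : ∀ s ∈ Set.Ico (0:ℝ) T,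
        HasDerivWithinAt h (h' s) (Set.Ico 0 T) s := by
      intro s hs
      have hcd : HasDerivWithinAt c (f' s) (Set.Ico 0 T) s := (hderiv s hs).const_add _
      have hrp := Real.hasDerivAt_rpow_const (x := c s) (p := -α)
        (Or.inl (hcpos s hs).ne')
      have hg' : HasDerivWithinAt g (-α * c s ^ (-α - 1) * f' s) (Set.Ico 0 T) s := by
        have := hrp.comp_hasDerivWithinAt s hcd
        exact this
      have hlin : HasDerivWithinAt (fun s => α * A * s) (α * A * 1) (Set.Ico 0 T) s :=
        (hasDerivWithinAt_id s _).const_mul (α * A)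
      exact hg'.add hlin
    have hD0 : ∀ s ∈ Set.Ico (0:ℝ) T, 0 ≤ h' s := by
      intro s hs
      have hcp := hcpos s hs
      have hfn := hf_nonneg s hs
      have h1 : (B + f s) ^ (1 + α) ≤ c s ^ (1 + α) := by
        apply Real.rpow_le_rpow (by linarith) (by simp only [hc]; linarith) (by linarith)
      have h2 : f' s ≤ A * c s ^ (1 + α) := by
        have := hineq s hs
        nlinarith [h1]
      have hu : (0:ℝ) < c s ^ (-α - 1) := Real.rpow_pos_of_pos hcp _
      have h3 : c s ^ (-α - 1) * f' s ≤ c s ^ (-α - 1) * (A * c s ^ (1 + α)) :=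
        mul_le_mul_of_nonneg_left h2 hu.le
      have h4 : c s ^ (-α - 1) * c s ^ (1 + α) = 1 := by
        rw [← Real.rpow_add hcp, show -α - 1 + (1 + α) = 0 by ring, Real.rpow_zero]
      have h5 : c s ^ (-α - 1) * f' s ≤ A := by
        calc c s ^ (-α - 1) * f' s ≤ c s ^ (-α - 1) * (A * c s ^ (1 + α)) := h3
          _ = A * (c s ^ (-α - 1) * c s ^ (1 + α)) := by ring
          _ = A := by rw [h4]; ring
      have h6 : α * (c s ^ (-α - 1) * f' s) ≤ α * A :=
        mul_le_mul_of_nonneg_left h5 hα.le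
      simp only [hh']
      nlinarith [h6]
    have hmono : MonotoneOn h (Set.Ico 0 T) := by
      apply monotoneOn_of_hasDerivWithinAt_nonneg (convex_Ico 0 T)
        (fun s hs => (hDh s hs).continuousWithinAt)
        (f' := h')
      · intro x hx
        rw [interior_Ico] at hx
        exact (hDh x ⟨hx.1.le, hx.2⟩).mono (by rw [interior_Ico]; exact Set.Ioo_subset_Ico_self)
      · intro x hx
        rw [interior_Ico] at hx
        exact hD0 x ⟨hx.1.le, hx.2⟩
    have step : ∀ δ > (0:ℝ), g t ≤ α * A * (T - t) + δ := by
      intro δ hδ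
      set M : ℝ := δ ^ (-(1 / α)) with hM
      have hMpos : 0 < M := Real.rpow_pos_of_pos hδ _
      have hfreq : ∃ᶠ s in nhdsWithin T (Set.Iio T), (M : EReal) < (f s : EReal) :=
        Filter.frequently_lt_of_lt_limsup (Filter.isCobounded_le_of_bot)
          (hblow ▸ EReal.coe_lt_top M)
      have hev : ∀ᶠ s in nhdsWithin T (Set.Iio T), t < s ∧ s < T := by
        filter_upwards [self_mem_nhdsWithin,
          nhdsWithin_le_nhds (lt_mem_nhds ht.2)] with s hs1 hs2
        exact ⟨hs2, hs1⟩
      obtain ⟨s, hMs, hts, hsT⟩ := (hfreq.and_eventually hev).exists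
      have hsI : s ∈ Set.Ico (0:ℝ) T := ⟨le_trans ht.1 hts.le, hsT⟩
      have hMfs : M < f s := by exact_mod_cast hMs
      have hgs : g s ≤ δ := by
        have hcs : M ≤ c s := by
          have := hf_nonneg s hsI
          simp only [hc]
          linarith
        have := Real.rpow_le_rpow_of_nonpos hMpos hcs (neg_nonpos.mpr hα.le)
        calc g s = c s ^ (-α) := rfl
          _ ≤ M ^ (-α) := this
          _ = δ := by
            rw [hM, ← Real.rpow_mul hδ.le]
            rw [show -(1/α) * -α = 1 by field_simp, Real.rpow_one]
      have hmt : h t ≤ h s := hmono ht hsI hts.le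
      simp only [hh] at hmt
      have hAα : 0 ≤ α * A := by positivity
      nlinarith [hmt, hgs, mul_le_mul_of_nonneg_left (show s - t ≤ T - t by linarith) hAα]
    have hgt : g t ≤ α * A * (T - t) := by
      by_contra hcon
      push_neg at hcon
      have := step ((g t - α * A * (T - t)) / 2) (by linarith)
      linarith
    have hKpos : 0 < α * A * (T - t) :=
      mul_pos (mul_pos hα hA) (by linarith [ht.2])
    have hgpos : 0 < g t := Real.rpow_pos_of_pos (hcpos t ht) _
    have hfin := Real.rpow_le_rpow_of_nonpos hgpos hgt
      (neg_nonpos.mpr (div_nonneg zero_le_one hα.le))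
    have heq : (g t) ^ (-(1 / α)) = c t := by
      simp only [hg]
      rw [← Real.rpow_mul (hcpos t ht).le, hmul, Real.rpow_one]
    rw [heq] at hfin
    simpa [hc] using hfin
  have h1 : (α * A * (T - t)) ^ (-(1 / α)) ≤ B + f t := by
    by_contra hcon
    push_neg at hcon
    have := key (((α * A * (T - t)) ^ (-(1 / α)) - (B + f t)) / 2) (by linarith)
    linarith
  exact ⟨h1, by linarith⟩
end
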